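/- arXiv:2407.14884 — 4 statements merged into one kernel-verified Lean document; each statement's English description precedes it below -/
import Mathlib

section
/- Let H, U be separable Hilbert spaces and f : P_2(H) → U with Λ-continuously Fréchet differentiable lift f̂(X) = f(law(X)) on L^2(Ω,H). Suppose X_0 ∈ L^2(Ω,H) takes finitely many values x_1,…,x_N with probabilities p_k > 0. Then for all A ∈ F and u ∈ H: Df̂(X_0)(1_A u) = Σ_{k=1}^N ℙ(A | X_0 = x_k) · Df̂(X_0)(1_{{X_0 = x_k}} u); equivalently, the vector measure m(A) := Df̂(X_0)(1_A ·) satisfies m(A) = ∫ E[1_A | X_0] dm. -/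
open MeasureTheory ENNReal Filter

set_option maxHeartbeats 1000000

noncomputable section

section Sierpinski

variable {α : Type*} [MeasurableSpace α] {μ : Measure α} [IsFiniteMeasure μ]

lemma my_half
    (hat : ∀ A : Set α, MeasurableSet A → 0 < μ A →
      ∃ B : Set α, MeasurableSet B ∧ B ⊆ A ∧ 0 < μ B ∧ μ B < μ A)
    {A : Set α} (hA : MeasurableSet A) (hpos : 0 < μ A) :
    ∃ B : Set α, MeasurableSet B ∧ B ⊆ A ∧ 0 < μ B ∧ μ B ≤ μ A / 2 := by
  obtain ⟨B, hB, hBA, h0, hlt⟩ := hat A hA hpos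
  rcases le_or_gt (μ B) (μ A / 2) with h | h
  · exact ⟨B, hB, hBA, h0, h⟩
  · refine ⟨A \ B, hA.diff hB, Set.diff_subset, ?_, ?_⟩
    · rw [measure_diff hBA hB.nullMeasurableSet (measure_ne_top μ B)]
      exact tsub_pos_of_lt hlt
    · rw [measure_diff hBA hB.nullMeasurableSet (measure_ne_top μ B)]
      calc μ A - μ B ≤ μ A - μ A / 2 := tsub_le_tsub_left h.le _
        _ = μ A / 2 := ENNReal.sub_half (measure_ne_top μ A)

lemma my_small
    (hat : ∀ A : Set α, MeasurableSet A → 0 < μ A →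
      ∃ B : Set α, MeasurableSet B ∧ B ⊆ A ∧ 0 < μ B ∧ μ B < μ A)
    {A : Set α} (hA : MeasurableSet A) (hpos : 0 < μ A) {ε : ℝ≥0∞} (hε : ε ≠ 0) :
    ∃ B : Set α, MeasurableSet B ∧ B ⊆ A ∧ 0 < μ B ∧ μ B ≤ ε := by
  have key : ∀ n : ℕ, ∃ B : Set α, MeasurableSet B ∧ B ⊆ A ∧ 0 < μ B ∧ μ B ≤ μ A * 2⁻¹ ^ n := by
    intro n; induction n with
    | zero => exact ⟨A, hA, subset_rfl, hpos, by simp⟩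
    | succ n ih =>
      obtain ⟨B, hB, hBA, h0, hle⟩ := ih
      obtain ⟨C, hC, hCB, h0', hle'⟩ := my_half hat hB h0
      refine ⟨C, hC, hCB.trans hBA, h0', ?_⟩
      calc μ C ≤ μ B / 2 := hle'
        _ = μ B * 2⁻¹ := by rw [div_eq_mul_inv]
        _ ≤ (μ A * 2⁻¹ ^ n) * 2⁻¹ := by gcongr
        _ = μ A * 2⁻¹ ^ (n + 1) := by rw [pow_succ, mul_assoc]
  rcases le_or_gt (μ A) ε with h | h
  · exact ⟨A, hA, subset_rfl, hpos, h⟩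
  · have hA0 : μ A ≠ 0 := hpos.ne'
    have hAt : μ A ≠ ∞ := measure_ne_top μ A
    have hdiv : ε / μ A ≠ 0 := by
      simp [ENNReal.div_eq_zero_iff, hε, hAt]
    obtain ⟨n, hn⟩ := ENNReal.exists_inv_two_pow_lt hdiv
    obtain ⟨B, hB, hBA, h0, hle⟩ := key n
    refine ⟨B, hB, hBA, h0, hle.trans ?_⟩
    calc μ A * 2⁻¹ ^ n ≤ μ A * (ε / μ A) := mul_le_mul_right hn.le (μ A)
      _ = ε := ENNReal.mul_div_cancel' (fun h => absurd h hA0) (fun h => absurd h hAt)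

lemma my_sierpinski
    (hat : ∀ A : Set α, MeasurableSet A → 0 < μ A →
      ∃ B : Set α, MeasurableSet B ∧ B ⊆ A ∧ 0 < μ B ∧ μ B < μ A)
    {s : Set α} (hs : MeasurableSet s) {r : ℝ≥0∞} (hr : r ≤ μ s) :
    ∃ t : Set α, MeasurableSet t ∧ t ⊆ s ∧ μ t = r := by
  classical
  -- a near-maximal admissible extension step
  have step : ∀ t : Set α, MeasurableSet t → t ⊆ s → μ t ≤ r →
      ∃ v : Set α, MeasurableSet v ∧ v ⊆ s \ t ∧
      μ v ≤ r - μ t ∧ ∀ w : Set α, MeasurableSet w → w ⊆ s \ t → μ w ≤ r - μ t →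
        μ w ≤ 2 * μ v := by
    intro t _ _ _
    set c : ℝ≥0∞ := ⨆ (w : Set α) (_ : MeasurableSet w ∧ w ⊆ s \ t ∧ μ w ≤ r - μ t), μ w with hc
    have hcle : c ≤ r - μ t := iSup_le fun w => iSup_le fun hw => hw.2.2
    rcases eq_or_ne c 0 with h0 | h0
    · refine ⟨∅, MeasurableSet.empty, Set.empty_subset _, by simp, fun w hw hws hwle => ?_⟩
      have h1 : μ w ≤ c := le_iSup₂
        (f := fun (w : Set α) (_ : MeasurableSet w ∧ w ⊆ s \ t ∧ μ w ≤ r - μ t) => μ w)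
        w ⟨hw, hws, hwle⟩
      rw [h0, le_zero_iff] at h1
      simp [h1]
    · have hct : c ≠ ∞ :=
        ((hcle.trans (tsub_le_self.trans hr)).trans_lt (measure_lt_top μ s)).ne
      have hhalf : c / 2 < c := ENNReal.half_lt_self h0 hct
      rw [hc, lt_iSup_iff] at hhalf
      obtain ⟨w, hw⟩ := hhalf
      rw [lt_iSup_iff] at hw
      obtain ⟨⟨hwm, hws, hwle⟩, hwgt⟩ := hw
      refine ⟨w, hwm, hws, hwle, fun w' hw' hws' hwle' => ?_⟩
      have h1 : μ w' ≤ c := le_iSup₂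
        (f := fun (w : Set α) (_ : MeasurableSet w ∧ w ⊆ s \ t ∧ μ w ≤ r - μ t) => μ w)
        w' ⟨hw', hws', hwle'⟩
      have h2 : c ≤ μ w * 2 := by
        rw [← ENNReal.div_le_iff_le_mul (Or.inl two_ne_zero) (Or.inl ENNReal.ofNat_ne_top)]
        exact hwgt.le
      exact h1.trans (h2.trans_eq (mul_comm _ _))
  choose! v hv1 hv2 hv3 hv4 using step
  -- build the increasing sequence of admissible sets, carrying the invariants
  let G := {t : Set α // MeasurableSet t ∧ t ⊆ s ∧ μ t ≤ r}
  have hbuild : ∀ t : G, MeasurableSet (t.1 ∪ v t.1) ∧ (t.1 ∪ v t.1) ⊆ s ∧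
      μ (t.1 ∪ v t.1) ≤ r := by
    rintro ⟨t, hm, hsub, hle⟩
    refine ⟨hm.union (hv1 t hm hsub hle),
      Set.union_subset hsub ((hv2 t hm hsub hle).trans Set.diff_subset), ?_⟩
    calc μ (t ∪ v t) ≤ μ t + μ (v t) := measure_union_le _ _
      _ ≤ μ t + (r - μ t) := by gcongr; exact hv3 t hm hsub hle
      _ = r := add_tsub_cancel_of_le hle
  let seq : ℕ → G := fun n =>
    Nat.rec ⟨∅, MeasurableSet.empty, Set.empty_subset _, by simp⟩
      (fun _ p => ⟨p.1 ∪ v p.1, hbuild p⟩) n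
  have hseq_succ : ∀ n, (seq (n + 1)).1 = (seq n).1 ∪ v (seq n).1 := fun n => rfl
  have hmono' : Monotone fun n => (seq n).1 :=
    monotone_nat_of_le_succ fun n => by rw [hseq_succ]; exact Set.subset_union_left
  set T : Set α := ⋃ n, (seq n).1 with hT
  have hTm : MeasurableSet T := MeasurableSet.iUnion fun n => (seq n).2.1
  have hTs : T ⊆ s := Set.iUnion_subset fun n => (seq n).2.2.1
  have hTle : μ T ≤ r := by
    rw [hT, hmono'.directed_le.measure_iUnion]
    exact iSup_le fun n => (seq n).2.2.2
  refine ⟨T, hTm, hTs, ?_⟩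
  by_contra hne
  have hlt : μ T < r := lt_of_le_of_ne hTle hne
  have hsT : 0 < μ (s \ T) := by
    by_contra h
    push_neg at h
    have h0 : μ (s \ T) = 0 := le_antisymm h bot_le
    have hle2 : μ s ≤ μ T := by
      calc μ s = μ (T ∪ (s \ T)) := by rw [Set.union_diff_cancel hTs]
        _ ≤ μ T + μ (s \ T) := measure_union_le _ _
        _ = μ T := by rw [h0, add_zero]
    exact absurd (hr.trans hle2) (not_le.mpr hlt)
  have hε : r - μ T ≠ 0 := by
    rw [ne_eq, tsub_eq_zero_iff_le]
    exact not_le.mpr hlt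
  obtain ⟨w, hwm, hws, hw0, hwle⟩ := my_small hat (hs.diff hTm) hsT hε
  -- every step grabs at least `μ w / 2`
  have hstep : ∀ n, μ w / 2 ≤ μ (v (seq n).1) := by
    intro n
    obtain ⟨hm, hsub, hle⟩ := (seq n).2
    have h1 : w ⊆ s \ (seq n).1 :=
      hws.trans (Set.diff_subset_diff_right (Set.subset_iUnion (fun n => (seq n).1) n))
    have h2 : μ w ≤ r - μ (seq n).1 :=
      hwle.trans (tsub_le_tsub_left (measure_mono (Set.subset_iUnion (fun n => (seq n).1) n)) r)
    have h3 := hv4 (seq n).1 hm hsub hle w hwm h1 h2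
    rw [mul_comm] at h3
    rwa [ENNReal.div_le_iff_le_mul (Or.inl two_ne_zero) (Or.inl ENNReal.ofNat_ne_top)]
  have hlower : ∀ n : ℕ, (n : ℝ≥0∞) * (μ w / 2) ≤ μ (seq n).1 := by
    intro n; induction n with
    | zero => simp
    | succ n ih =>
      obtain ⟨hm, hsub, hle⟩ := (seq n).2
      have hdisj : Disjoint (seq n).1 (v (seq n).1) :=
        Set.disjoint_of_subset_right (hv2 _ hm hsub hle) Set.disjoint_sdiff_right
      have heq : μ (seq (n + 1)).1 = μ (seq n).1 + μ (v (seq n).1) := by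
        rw [hseq_succ]
        exact measure_union hdisj (hv1 _ hm hsub hle)
      rw [heq]
      push_cast
      rw [add_mul, one_mul]
      exact add_le_add ih (hstep n)
  have hw2 : μ w / 2 ≠ 0 := by
    simp only [ne_eq, ENNReal.div_eq_zero_iff, ENNReal.ofNat_ne_top, or_false]
    exact hw0.ne'
  obtain ⟨n, hn⟩ := ENNReal.exists_nat_gt
    (ENNReal.div_lt_top (measure_ne_top μ s) hw2).ne
  rw [ENNReal.div_lt_iff (Or.inl hw2)
    (Or.inl (ne_top_of_le_ne_top (measure_ne_top μ w) ENNReal.half_le_self))] at hn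
  have hcontr : μ s < μ s :=
    lt_of_lt_of_le hn ((hlower n).trans (measure_mono (seq n).2.2.1))
  exact lt_irrefl _ hcontr

end Sierpinski

section IndAux

variable {α E : Type*} [MeasurableSpace α] {μ : Measure α} [IsFiniteMeasure μ]
  [NormedAddCommGroup E] {p : ℝ≥0∞}

lemma my_indicatorConstLp_congr {s t : Set α} (h : s = t) (hs : MeasurableSet s)
    (hsμ : μ s ≠ ∞) (ht : MeasurableSet t) (htμ : μ t ≠ ∞) (c : E) :
    indicatorConstLp p hs hsμ c = indicatorConstLp p ht htμ c := by
  subst h; rfl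

lemma my_ind_null {B : Set α} (hB : MeasurableSet B) (h0 : μ B = 0) (c : E) :
    indicatorConstLp p hB (measure_ne_top μ B) c = 0 := by
  ext1
  refine indicatorConstLp_coeFn.trans ?_
  refine EventuallyEq.trans ?_ (Lp.coeFn_zero E p μ).symm
  have : ∀ᵐ ω ∂μ, ω ∉ B := measure_eq_zero_iff_ae_notMem.mp h0
  filter_upwards [this] with ω hω
  simp [Set.indicator_of_notMem hω]

lemma my_ind_biUnion {n : ℕ} {C : Fin n → Set α} (hC : ∀ i, MeasurableSet (C i))
    (hd : Pairwise (Function.onFun Disjoint C)) (c : E) (S : Finset (Fin n)) :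
    indicatorConstLp p (S.measurableSet_biUnion (fun i _ => hC i)) (measure_ne_top μ _) c
      = ∑ i ∈ S, indicatorConstLp p (hC i) (measure_ne_top μ (C i)) c := by
  classical
  induction S using Finset.induction_on with
  | empty =>
    rw [my_indicatorConstLp_congr (show (⋃ i ∈ (∅ : Finset (Fin n)), C i) = ∅ by simp)
      _ _ MeasurableSet.empty (by simp)]
    simp
  | @insert a S ha ih =>
    have hset : (⋃ i ∈ insert a S, C i) = C a ∪ ⋃ i ∈ S, C i := by
      simp [Set.biUnion_insert]
    have hdis : Disjoint (C a) (⋃ i ∈ S, C i) := by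
      refine Set.disjoint_iUnion_right.mpr fun i => Set.disjoint_iUnion_right.mpr fun hi => ?_
      exact hd (fun h => ha (h ▸ hi))
    rw [my_indicatorConstLp_congr hset _ _
      ((hC a).union (S.measurableSet_biUnion (fun i _ => hC i)))
      (measure_ne_top μ _),
      indicatorConstLp_disjoint_union (hC a) (S.measurableSet_biUnion (fun i _ => hC i))
        (measure_ne_top μ _) (measure_ne_top μ _) hdis,
      ih, Finset.sum_insert ha]

lemma my_ind_iUnion {n : ℕ} {C : Fin n → Set α} (hC : ∀ i, MeasurableSet (C i))
    (hd : Pairwise (Function.onFun Disjoint C)) (c : E) :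
    indicatorConstLp p (MeasurableSet.iUnion hC) (measure_ne_top μ _) c
      = ∑ i, indicatorConstLp p (hC i) (measure_ne_top μ (C i)) c := by
  rw [my_indicatorConstLp_congr (show (⋃ i, C i) = ⋃ i ∈ Finset.univ, C i by simp)
    _ _ (Finset.univ.measurableSet_biUnion (fun i _ => hC i)) (measure_ne_top μ _)]
  exact my_ind_biUnion hC hd c Finset.univ

end IndAux

section MapAux

variable {α H : Type*} [MeasurableSpace α] [MeasurableSpace H]

lemma my_map_piecewise (μ : Measure α) [IsFiniteMeasure μ]
    {X0 : α → H} (hX0 : Measurable X0) (c v : H) {B B' : Set α}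
    [∀ j, Decidable (j ∈ B)] [∀ j, Decidable (j ∈ B')]
    (hB : MeasurableSet B) (hB' : MeasurableSet B')
    (hBc : B ⊆ X0 ⁻¹' {c}) (hB'c : B' ⊆ X0 ⁻¹' {c}) (heq : μ B = μ B') :
    μ.map (B.piecewise (fun _ => v) X0) = μ.map (B'.piecewise (fun _ => v) X0) := by
  classical
  have hpre : ∀ (D : Set α) [∀ j, Decidable (j ∈ D)] (S : Set H), (D.piecewise (fun _ => v) X0) ⁻¹' S
      = (if v ∈ S then D else ∅) ∪ ((X0 ⁻¹' S) \ D) := by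
    intro D _ S
    ext ω
    by_cases hω : ω ∈ D <;> by_cases hv : v ∈ S <;>
      simp [Set.piecewise, hω, hv]
  have hval : ∀ (D : Set α) [∀ j, Decidable (j ∈ D)], MeasurableSet D → D ⊆ X0 ⁻¹' {c} → μ D = μ B → ∀ S : Set H,
      MeasurableSet S →
      μ ((D.piecewise (fun _ => v) X0) ⁻¹' S)
        = (if v ∈ S then μ B else 0) + (μ (X0 ⁻¹' S) - if c ∈ S then μ B else 0) := by
    intro D _ hD hDc hDB S hS
    rw [hpre]
    have hdisj : Disjoint (if v ∈ S then D else ∅) ((X0 ⁻¹' S) \ D) := by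
      split <;> simp [Set.disjoint_sdiff_right]
    rw [measure_union hdisj ((hX0 hS).diff hD)]
    congr 1
    · split <;> simp [hDB]
    · by_cases hc : c ∈ S
      · have hsub : D ⊆ X0 ⁻¹' S := hDc.trans (fun ω hω => by
          simp only [Set.mem_preimage, Set.mem_singleton_iff] at hω
          simp [Set.mem_preimage, hω, hc])
        rw [measure_diff hsub hD.nullMeasurableSet (measure_ne_top μ D), hDB, if_pos hc]
      · have hint : X0 ⁻¹' S \ D = X0 ⁻¹' S := by
          ext ω
          simp only [Set.mem_diff, Set.mem_preimage, and_iff_left_iff_imp]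
          intro hω2 hω
          have := hDc hω
          simp only [Set.mem_preimage, Set.mem_singleton_iff] at this
          exact hc (by rw [← this]; exact hω2)
        rw [hint, if_neg hc, tsub_zero]
  have hm : ∀ (D : Set α) [∀ j, Decidable (j ∈ D)], MeasurableSet D → Measurable (D.piecewise (fun _ => v) X0) :=
    fun D _ hD => Measurable.piecewise hD measurable_const hX0
  refine Measure.ext fun S hS => ?_
  rw [Measure.map_apply (hm B hB) hS, Measure.map_apply (hm B' hB') hS,
    hval B hB hBc rfl S hS, hval B' hB' hB'c heq.symm S hS]

end MapAux

section DerivEq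

variable {Ω H U : Type*} [MeasurableSpace Ω]
  [NormedAddCommGroup H] [InnerProductSpace ℝ H] [MeasurableSpace H] [BorelSpace H]
  [NormedAddCommGroup U] [InnerProductSpace ℝ U]

lemma my_deriv_eq (P : Measure Ω) [IsProbabilityMeasure P]
    (fhat : Lp H 2 P → U)
    (hlaw : ∀ X X' : Lp H 2 P, P.map ⇑X = P.map ⇑X' → fhat X = fhat X')
    (Df : Lp H 2 P → (Lp H 2 P →L[ℝ] U))
    (hderiv : ∀ X : Lp H 2 P, HasFDerivAt fhat (Df X) X)
    {X0 : Ω → H} (hX0meas : Measurable X0) (hX0 : MemLp X0 2 P)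
    {c : H} {B B' : Set Ω} (hB : MeasurableSet B) (hB' : MeasurableSet B')
    (hBc : B ⊆ X0 ⁻¹' {c}) (hB'c : B' ⊆ X0 ⁻¹' {c}) (heq : P B = P B') (u : H) :
    Df (MemLp.toLp X0 hX0) (indicatorConstLp 2 hB (measure_ne_top P B) u)
      = Df (MemLp.toLp X0 hX0) (indicatorConstLp 2 hB' (measure_ne_top P B') u) := by
  classical
  set X := MemLp.toLp X0 hX0 with hX
  set V := indicatorConstLp 2 hB (measure_ne_top P B) u with hV
  set V' := indicatorConstLp 2 hB' (measure_ne_top P B') u with hV'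
  have hae : ∀ (s : ℝ) (D : Set Ω) (hD : MeasurableSet D), D ⊆ X0 ⁻¹' {c} →
      ⇑(X + s • (indicatorConstLp 2 hD (measure_ne_top P D) u))
        =ᵐ[P] D.piecewise (fun _ => c + s • u) X0 := by
    intro s D hD hDc
    filter_upwards [Lp.coeFn_add X (s • (indicatorConstLp 2 hD (measure_ne_top P D) u)),
      Lp.coeFn_smul s (indicatorConstLp 2 hD (measure_ne_top P D) u),
      MemLp.coeFn_toLp hX0,
      indicatorConstLp_coeFn (p := 2) (μ := P) (hs := hD) (hμs := measure_ne_top P D) (c := u)]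
      with ω h1 h2 h3 h4
    rw [h1, Pi.add_apply, h2, Pi.smul_apply, h3, h4]
    by_cases hω : ω ∈ D
    · have hc : X0 ω = c := hDc hω
      rw [Set.indicator_of_mem hω, Set.piecewise_eq_of_mem _ _ _ hω, hc]
    · rw [Set.indicator_of_notMem hω, Set.piecewise_eq_of_notMem _ _ _ hω, smul_zero, add_zero]
  have hmapeq : ∀ s : ℝ, P.map ⇑(X + s • V) = P.map ⇑(X + s • V') := by
    intro s
    rw [Measure.map_congr (hae s B hB hBc), Measure.map_congr (hae s B' hB' hB'c)]
    exact my_map_piecewise P hX0meas c (c + s • u) hB hB' hBc hB'c heq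
  have hfun : (fun s : ℝ => fhat (X + s • V)) = (fun s : ℝ => fhat (X + s • V')) :=
    funext fun s => hlaw _ _ (hmapeq s)
  have hcurve : ∀ W : Lp H 2 P, HasDerivAt (fun s : ℝ => X + s • W) W 0 := by
    intro W
    have h1 : HasDerivAt (fun s : ℝ => s • W) ((1 : ℝ) • W) 0 :=
      (hasDerivAt_id 0).smul_const W
    simpa using h1.const_add X
  have hd : HasDerivAt (fun s : ℝ => fhat (X + s • V)) (Df X V) 0 := by
    have h0 : HasFDerivAt fhat (Df X) ((fun s : ℝ => X + s • V) 0) := by simpa using hderiv X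
    exact h0.comp_hasDerivAt 0 (hcurve V)
  have hd' : HasDerivAt (fun s : ℝ => fhat (X + s • V')) (Df X V') 0 := by
    have h0 : HasFDerivAt fhat (Df X) ((fun s : ℝ => X + s • V') 0) := by simpa using hderiv X
    exact h0.comp_hasDerivAt 0 (hcurve V')
  rw [hfun] at hd
  exact hd.unique hd'

end DerivEq

section Linear

variable {Ω H U : Type*} [MeasurableSpace Ω]
  [NormedAddCommGroup H] [InnerProductSpace ℝ H] [MeasurableSpace H] [BorelSpace H]
  [NormedAddCommGroup U] [InnerProductSpace ℝ U]

lemma my_linear (P : Measure Ω) [IsProbabilityMeasure P]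
    (hatomless : ∀ A : Set Ω, MeasurableSet A → 0 < P A →
      ∃ B : Set Ω, MeasurableSet B ∧ B ⊆ A ∧ 0 < P B ∧ P B < P A)
    (fhat : Lp H 2 P → U)
    (hlaw : ∀ X X' : Lp H 2 P, P.map ⇑X = P.map ⇑X' → fhat X = fhat X')
    (Df : Lp H 2 P → (Lp H 2 P →L[ℝ] U))
    (hderiv : ∀ X : Lp H 2 P, HasFDerivAt fhat (Df X) X)
    {X0 : Ω → H} (hX0meas : Measurable X0) (hX0 : MemLp X0 2 P)
    {c : H} (he : MeasurableSet (X0 ⁻¹' {c})) (hpos : 0 < P (X0 ⁻¹' {c}))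
    {B : Set Ω} (hB : MeasurableSet B) (hBc : B ⊆ X0 ⁻¹' {c}) (u : H) :
    Df (MemLp.toLp X0 hX0) (indicatorConstLp 2 hB (measure_ne_top P B) u)
      = ((P B / P (X0 ⁻¹' {c})).toReal) •
        Df (MemLp.toLp X0 hX0) (indicatorConstLp 2 he (measure_ne_top P (X0 ⁻¹' {c})) u) := by
  classical
  set e : Set Ω := X0 ⁻¹' {c} with hedef
  set L : Lp H 2 P →L[ℝ] U := Df (MemLp.toLp X0 hX0) with hL
  set m : (D : Set Ω) → MeasurableSet D → U :=
    fun D hD => L (indicatorConstLp 2 hD (measure_ne_top P D) u) with hm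
  set p : ℝ≥0∞ := P e with hpdef
  have hp0 : p ≠ 0 := hpos.ne'
  have hpt : p ≠ ∞ := measure_ne_top P e
  -- m only depends on the measure, for subsets of e
  have hcong : ∀ (D D' : Set Ω) (hD : MeasurableSet D) (hD' : MeasurableSet D'),
      D ⊆ e → D' ⊆ e → P D = P D' → m D hD = m D' hD' :=
    fun D D' hD hD' hDe hD'e h =>
      my_deriv_eq P fhat hlaw Df hderiv hX0meas hX0 hD hD' hDe hD'e h u
  -- additivity
  have hadd : ∀ (D D' : Set Ω) (hD : MeasurableSet D) (hD' : MeasurableSet D'),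
      Disjoint D D' → m (D ∪ D') (hD.union hD') = m D hD + m D' hD' := by
    intro D D' hD hD' hdisj
    rw [hm]
    simp only
    rw [indicatorConstLp_disjoint_union hD hD' (measure_ne_top P D) (measure_ne_top P D') hdisj u,
      map_add]
  have hnull : ∀ (D : Set Ω) (hD : MeasurableSet D), P D = 0 → m D hD = 0 := by
    intro D hD h0
    rw [hm]
    simp only
    rw [my_ind_null hD h0, map_zero]
  have hsplit : ∀ (D D' : Set Ω) (hD : MeasurableSet D) (hD' : MeasurableSet D'), D' ⊆ D →
      m D hD = m D' hD' + m (D \ D') (hD.diff hD') := by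
    intro D D' hD hD' hsub
    have h1 : m D hD = m (D' ∪ (D \ D')) (hD'.union (hD.diff hD')) := by
      rw [hm]; simp only
      exact congrArg L (my_indicatorConstLp_congr (Set.union_diff_cancel hsub).symm _ _ _ _ u)
    rw [h1, hadd D' (D \ D') hD' (hD.diff hD') Set.disjoint_sdiff_right]
  -- counting lemma: sets of measure a • q are worth a • (a set of measure q)
  have hcount : ∀ (q : ℝ≥0∞) (B₁ : Set Ω) (hB₁ : MeasurableSet B₁), B₁ ⊆ e → P B₁ = q →
      ∀ (a : ℕ) (D : Set Ω) (hD : MeasurableSet D), D ⊆ e → P D = (a : ℝ≥0∞) * q →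
      m D hD = (a : ℝ) • m B₁ hB₁ := by
    intro q B₁ hB₁ hB₁e hB₁q a
    have hqt : q ≠ ∞ := hB₁q ▸ measure_ne_top P B₁
    induction a with
    | zero =>
      intro D hD hDe hPD
      rw [hnull D hD (by simpa using hPD)]
      simp
    | succ a ih =>
      intro D hD hDe hPD
      have hle : (a : ℝ≥0∞) * q ≤ P D := by
        rw [hPD]
        exact mul_le_mul_left (by exact_mod_cast Nat.le_succ a) q
      obtain ⟨D', hD', hD'D, hPD'⟩ := my_sierpinski hatomless hD hle
      have hdq : P (D \ D') = q := by
        rw [measure_diff hD'D hD'.nullMeasurableSet (measure_ne_top P D'), hPD, hPD']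
        push_cast
        rw [add_mul, one_mul, ENNReal.add_sub_cancel_left
          (ENNReal.mul_ne_top (ENNReal.natCast_ne_top a) hqt)]
      rw [hsplit D D' hD hD' hD'D, ih D' hD' (hD'D.trans hDe) hPD',
        hcong (D \ D') B₁ (hD.diff hD') hB₁ ((Set.diff_subset).trans hDe) hB₁e
          (by rw [hdq, hB₁q])]
      push_cast
      rw [add_smul, one_smul]
  -- rational case
  have key_rat : ∀ (n : ℕ), 0 < n → ∀ (a : ℕ), a ≤ n → ∀ (D : Set Ω) (hD : MeasurableSet D),
      D ⊆ e → P D = (a : ℝ≥0∞) * (p / n) → m D hD = ((a : ℝ) / n) • m e he := by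
    intro n hn a _ D hD hDe hPD
    have hdivle : p / n ≤ p := by
      calc p / n ≤ p / 1 := ENNReal.div_le_div_left (by exact_mod_cast hn) p
        _ = p := by rw [div_one]
    obtain ⟨B₁, hB₁, hB₁e, hPB₁⟩ := my_sierpinski hatomless he hdivle
    have h1 : m D hD = (a : ℝ) • m B₁ hB₁ := hcount (p / n) B₁ hB₁ hB₁e hPB₁ a D hD hDe hPD
    have hne : (n : ℝ≥0∞) ≠ 0 := by exact_mod_cast hn.ne'
    have h2 : m e he = (n : ℝ) • m B₁ hB₁ :=
      hcount (p / n) B₁ hB₁ hB₁e hPB₁ n e he subset_rfl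
        (by rw [ENNReal.mul_div_cancel' (fun h => absurd h hne) (fun h => absurd h (ENNReal.natCast_ne_top n))])
    have hn' : (n : ℝ) ≠ 0 := Nat.cast_ne_zero.mpr hn.ne'
    rw [h1, h2, smul_smul]
    congr 1
    field_simp
  -- general case by approximation
  set β : ℝ≥0∞ := P B with hβdef
  have hβe : β ≤ p := measure_mono hBc
  have hβt : β ≠ ∞ := measure_ne_top P B
  set p' : ℝ := p.toReal with hp'def
  set β' : ℝ := β.toReal with hβ'def
  have hp'pos : 0 < p' := ENNReal.toReal_pos hp0 hpt
  have hβ'p' : β' ≤ p' := (ENNReal.toReal_le_toReal hβt hpt).mpr hβe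
  have hβ'0 : 0 ≤ β' := ENNReal.toReal_nonneg
  have main : ∀ n : ℕ, 1 ≤ n → ‖m B hB - (β' / p') • m e he‖ ≤
      ‖L‖ * ‖u‖ * Real.sqrt (p' / n) + (1 / n) * ‖m e he‖ := by
    intro n hn
    have hnR : (0 : ℝ) < n := by exact_mod_cast hn
    set a : ℕ := ⌊β' * n / p'⌋₊ with hadef
    have hfl : (a : ℝ) ≤ β' * n / p' := Nat.floor_le (by positivity)
    have hfl2 : β' * n / p' < a + 1 := Nat.lt_floor_add_one _
    have han : a ≤ n := by
      have h1 : β' * n / p' ≤ n := by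
        rw [div_le_iff₀ hp'pos]
        calc β' * ↑n ≤ p' * ↑n := mul_le_mul_of_nonneg_right hβ'p' hnR.le
          _ = ↑n * p' := mul_comm _ _
      have h2 : (a : ℝ) ≤ n := hfl.trans h1
      exact_mod_cast h2
    have hpnt : p / n ≠ ∞ := by
      refine ne_top_of_le_ne_top hpt ?_
      calc p / n ≤ p / 1 := ENNReal.div_le_div_left (by exact_mod_cast hn) p
        _ = p := by rw [div_one]
    have hprodt : (a : ℝ≥0∞) * (p / n) ≠ ∞ := ENNReal.mul_ne_top (ENNReal.natCast_ne_top a) hpnt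
    have hpn_toReal : (p / (n : ℝ≥0∞)).toReal = p' / n := by
      rw [ENNReal.toReal_div, ENNReal.toReal_natCast]
    have hq : (a : ℝ≥0∞) * (p / n) ≤ β := by
      rw [← ENNReal.toReal_le_toReal hprodt hβt]
      rw [ENNReal.toReal_mul, ENNReal.toReal_natCast, hpn_toReal]
      have h3 : (a : ℝ) * (p' / n) ≤ (β' * n / p') * (p' / n) :=
        mul_le_mul_of_nonneg_right hfl (le_of_lt (div_pos hp'pos hnR))
      have h4 : (β' * n / p') * (p' / n) = β' := by field_simp
      rw [h4] at h3
      exact h3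
    obtain ⟨Bn, hBn, hBnB, hPBn⟩ := my_sierpinski hatomless hB hq
    have h1 : m Bn hBn = ((a : ℝ) / n) • m e he :=
      key_rat n (by omega) a han Bn hBn (hBnB.trans hBc) hPBn
    have hsplitB : m B hB = m Bn hBn + m (B \ Bn) (hB.diff hBn) := hsplit B Bn hB hBn hBnB
    have htail : (P (B \ Bn)).toReal ≤ p' / n := by
      rw [measure_diff hBnB hBn.nullMeasurableSet (measure_ne_top P Bn), hPBn]
      rw [ENNReal.toReal_sub_of_le hq hβt, ENNReal.toReal_mul, ENNReal.toReal_natCast,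
        hpn_toReal]
      have h5 : β' ≤ ((a : ℝ) + 1) * (p' / n) := by
        have h6 := mul_le_mul_of_nonneg_right hfl2.le (le_of_lt (div_pos hp'pos hnR))
        have h7 : (β' * n / p') * (p' / n) = β' := by field_simp
        rw [h7] at h6
        exact h6
      have h8 : ((a : ℝ) + 1) * (p' / n) = (a : ℝ) * (p' / n) + p' / n := by ring
      linarith
    have htailnorm : ‖m (B \ Bn) (hB.diff hBn)‖ ≤ ‖L‖ * ‖u‖ * Real.sqrt (p' / n) := by
      have hv := L.le_opNorm (indicatorConstLp 2 (hB.diff hBn) (measure_ne_top P (B \ Bn)) u)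
      have hnorm : ‖indicatorConstLp 2 (hB.diff hBn) (measure_ne_top P (B \ Bn)) u‖
          = ‖u‖ * (P (B \ Bn)).toReal ^ (1 / (2 : ℝ≥0∞).toReal) :=
        norm_indicatorConstLp two_ne_zero ENNReal.ofNat_ne_top
      have h2 : (1 / (2 : ℝ≥0∞).toReal) = (1 / 2 : ℝ) := by norm_num
      rw [h2] at hnorm
      have h3 : (P (B \ Bn)).toReal ^ (1 / 2 : ℝ) = Real.sqrt ((P (B \ Bn)).toReal) :=
        (Real.sqrt_eq_rpow _).symm
      have h4 : Real.sqrt ((P (B \ Bn)).toReal) ≤ Real.sqrt (p' / n) :=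
        Real.sqrt_le_sqrt htail
      calc ‖m (B \ Bn) (hB.diff hBn)‖
          ≤ ‖L‖ * ‖indicatorConstLp 2 (hB.diff hBn) (measure_ne_top P (B \ Bn)) u‖ := hv
        _ = ‖L‖ * (‖u‖ * (P (B \ Bn)).toReal ^ (1 / 2 : ℝ)) := by rw [hnorm]
        _ = ‖L‖ * ‖u‖ * (P (B \ Bn)).toReal ^ (1 / 2 : ℝ) := by ring
        _ = ‖L‖ * ‖u‖ * Real.sqrt ((P (B \ Bn)).toReal) := by rw [h3]
        _ ≤ ‖L‖ * ‖u‖ * Real.sqrt (p' / n) := by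
            apply mul_le_mul_of_nonneg_left h4
            positivity
    have hcoef : |(a : ℝ) / n - β' / p'| ≤ 1 / n := by
      have hab : (a : ℝ) / n ≤ β' / p' := by
        rw [div_le_div_iff₀ hnR hp'pos]
        calc (a : ℝ) * p' ≤ (β' * n / p') * p' :=
          mul_le_mul_of_nonneg_right hfl hp'pos.le
          _ = β' * n := by field_simp
      have hba : β' / p' ≤ ((a : ℝ) + 1) / n := by
        rw [div_le_div_iff₀ hp'pos hnR]
        calc β' * n = (β' * n / p') * p' := by field_simp
          _ ≤ ((a : ℝ) + 1) * p' := mul_le_mul_of_nonneg_right hfl2.le hp'pos.le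
      rw [abs_sub_comm, abs_of_nonneg (by linarith)]
      have : ((a : ℝ) + 1) / n - (a : ℝ) / n = 1 / n := by field_simp; ring
      linarith [hba, hab, this]
    have hdecomp : m B hB - (β' / p') • m e he
        = m (B \ Bn) (hB.diff hBn) + (((a : ℝ) / n) - β' / p') • m e he := by
      rw [hsplitB, h1, sub_smul]
      abel
    rw [hdecomp]
    calc ‖m (B \ Bn) (hB.diff hBn) + (((a : ℝ) / n) - β' / p') • m e he‖
        ≤ ‖m (B \ Bn) (hB.diff hBn)‖ + ‖(((a : ℝ) / n) - β' / p') • m e he‖ := norm_add_le _ _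
      _ ≤ ‖L‖ * ‖u‖ * Real.sqrt (p' / n) + (1 / n) * ‖m e he‖ := by
          refine add_le_add htailnorm ?_
          rw [norm_smul, Real.norm_eq_abs]
          exact mul_le_mul_of_nonneg_right hcoef (norm_nonneg _)
  -- take the limit
  have hlim : Tendsto (fun n : ℕ => ‖L‖ * ‖u‖ * Real.sqrt (p' / n) + (1 / n) * ‖m e he‖)
      atTop (nhds 0) := by
    have h1 : Tendsto (fun n : ℕ => p' / n) atTop (nhds 0) :=
      tendsto_const_div_atTop_nhds_zero_nat p'
    have h2 : Tendsto (fun n : ℕ => Real.sqrt (p' / n)) atTop (nhds 0) := by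
      have h2' := (Real.continuous_sqrt.tendsto 0).comp h1
      rw [Real.sqrt_zero] at h2'
      exact h2'
    have h3 : Tendsto (fun n : ℕ => 1 / (n : ℝ)) atTop (nhds 0) :=
      tendsto_one_div_atTop_nhds_zero_nat
    have h4 := (h2.const_mul (‖L‖ * ‖u‖)).add (h3.mul_const ‖m e he‖)
    simpa using h4
  have hle0 : ‖m B hB - (β' / p') • m e he‖ ≤ 0 :=
    ge_of_tendsto hlim (eventually_atTop.2 ⟨1, main⟩)
  have hzero : m B hB - (β' / p') • m e he = 0 :=
    norm_le_zero_iff.mp hle0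
  have hfinal : m B hB = (β' / p') • m e he := by
    rwa [sub_eq_zero] at hzero
  have htr : (β / p).toReal = β' / p' := ENNReal.toReal_div β p
  rw [show (P B / P (X0 ⁻¹' {c})).toReal = β' / p' from htr]
  exact hfinal

end Linear

/-- `⦀L⦀_{2,ℙ}`-type semivariation norm, with general exponent `p`, of an operator
`L : L^p(Ω,H,ℙ) → U`. -/
def opSemiVar {Ω E F : Type*} [MeasurableSpace Ω] (P : Measure Ω) [IsFiniteMeasure P]
    [NormedAddCommGroup E] [NormedSpace ℝ E] [NormedAddCommGroup F] [NormedSpace ℝ F]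
    (p : ℝ≥0∞) [Fact (1 ≤ p)] (L : Lp E p P →L[ℝ] F) : ℝ≥0∞ :=
  ⨆ (n : ℕ) (As : Fin n → Set Ω) (xs : Fin n → E) (hAs : ∀ i, MeasurableSet (As i))
    (_ : Pairwise (Function.onFun Disjoint As))
    (_ : eLpNorm (fun ω => ∑ i, (As i).indicator (fun _ => xs i) ω) p P ≤ 1),
    ∑ i, (‖L (indicatorConstLp p (hAs i) (measure_ne_top P (As i)) (xs i))‖₊ : ℝ≥0∞)

/-- Disintegration of the derivative of the lifted map at a finitely supported random
variable: if the lift `f̂` of `f : P₂(H) → U` is Λ-continuously Fréchet differentiable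
and `X₀` takes the finitely many values `x₁,…,x_N` with positive probabilities, then
`Df̂(X₀)(1_A u) = ∑ₖ ℙ(A | X₀ = xₖ) · Df̂(X₀)(1_{X₀ = xₖ} u)`. -/
theorem stmt12 {Ω H U : Type*}
    [MeasurableSpace Ω] [TopologicalSpace Ω] [PolishSpace Ω] [BorelSpace Ω]
    (P : Measure Ω) [IsProbabilityMeasure P]
    (hatomless : ∀ A : Set Ω, MeasurableSet A → 0 < P A →
      ∃ B : Set Ω, MeasurableSet B ∧ B ⊆ A ∧ 0 < P B ∧ P B < P A)
    [NormedAddCommGroup H] [InnerProductSpace ℝ H] [CompleteSpace H]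
    [SecondCountableTopology H] [MeasurableSpace H] [BorelSpace H]
    [NormedAddCommGroup U] [InnerProductSpace ℝ U] [CompleteSpace U]
    (fhat : Lp H 2 P → U)
    -- `f̂` is a lift: it only depends on the law of its argument
    (hlaw : ∀ X X' : Lp H 2 P, P.map ⇑X = P.map ⇑X' → fhat X = fhat X')
    (Df : Lp H 2 P → (Lp H 2 P →L[ℝ] U))
    (hderiv : ∀ X : Lp H 2 P, HasFDerivAt fhat (Df X) X)
    -- Λ-continuity: finite 2-semivariation norms and continuity in that norm
    (hΛfin : ∀ X : Lp H 2 P, opSemiVar P 2 (Df X) < ∞)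
    (hΛcont : ∀ (X : Lp H 2 P) (ε : ℝ≥0∞), 0 < ε → ∃ δ > (0 : ℝ), ∀ X' : Lp H 2 P,
      ‖X' - X‖ < δ → opSemiVar P 2 (Df X' - Df X) < ε)
    (X0 : Ω → H) (hX0meas : Measurable X0) (hX0 : MemLp X0 2 P)
    (N : ℕ) (x : Fin N → H) (hinj : Function.Injective x)
    (hvals : ∀ ω, ∃ k, X0 ω = x k)
    (hpos : ∀ k, 0 < P (X0 ⁻¹' {x k}))
    (A : Set Ω) (hA : MeasurableSet A) (u : H) :
    Df (MemLp.toLp X0 hX0) (indicatorConstLp 2 hA (measure_ne_top P A) u) =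
      ∑ k, ((P (A ∩ X0 ⁻¹' {x k}) / P (X0 ⁻¹' {x k})).toReal) •
        Df (MemLp.toLp X0 hX0)
          (indicatorConstLp 2 (hX0meas (isClosed_singleton.measurableSet))
            (measure_ne_top P (X0 ⁻¹' {x k})) u) := by
  have hE : ∀ k, MeasurableSet (X0 ⁻¹' {x k}) :=
    fun k => hX0meas (isClosed_singleton.measurableSet)
  set C : Fin N → Set Ω := fun k => A ∩ X0 ⁻¹' {x k} with hC
  have hCmeas : ∀ k, MeasurableSet (C k) := fun k => hA.inter (hE k)
  have hdisj : Pairwise (Function.onFun Disjoint C) := by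
    intro k j hkj
    rw [Function.onFun]
    rw [Set.disjoint_left]
    intro ω h1 h2
    have e1 : X0 ω = x k := h1.2
    have e2 : X0 ω = x j := h2.2
    exact hkj (hinj (e1 ▸ e2 ▸ rfl))
  have hcover : A = ⋃ k, C k := by
    ext ω
    constructor
    · intro hω
      obtain ⟨k, hk⟩ := hvals ω
      exact Set.mem_iUnion.mpr ⟨k, hω, by simp [hk]⟩
    · intro hω
      obtain ⟨k, hk⟩ := Set.mem_iUnion.mp hω
      exact hk.1
  calc Df (MemLp.toLp X0 hX0) (indicatorConstLp 2 hA (measure_ne_top P A) u)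
      = Df (MemLp.toLp X0 hX0)
          (indicatorConstLp 2 (MeasurableSet.iUnion hCmeas) (measure_ne_top P _) u) := by
        rw [my_indicatorConstLp_congr hcover hA (measure_ne_top P A)
          (MeasurableSet.iUnion hCmeas) (measure_ne_top P _) u]
    _ = Df (MemLp.toLp X0 hX0) (∑ k, indicatorConstLp 2 (hCmeas k) (measure_ne_top P (C k)) u) := by
        rw [my_ind_iUnion hCmeas hdisj u]
    _ = ∑ k, Df (MemLp.toLp X0 hX0) (indicatorConstLp 2 (hCmeas k) (measure_ne_top P (C k)) u) :=
        map_sum _ _ _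
    _ = ∑ k, ((P (A ∩ X0 ⁻¹' {x k}) / P (X0 ⁻¹' {x k})).toReal) •
        Df (MemLp.toLp X0 hX0)
          (indicatorConstLp 2 (hX0meas (isClosed_singleton.measurableSet))
            (measure_ne_top P (X0 ⁻¹' {x k})) u) := by
        refine Finset.sum_congr rfl fun k _ => ?_
        exact my_linear P hatomless fhat hlaw Df hderiv hX0meas hX0 (hE k) (hpos k)
          (hCmeas k) Set.inter_subset_right u
end
end

section
/- Let H, U be separable Hilbert spaces and f : P_2(H) → U absolutely continuously L-differentiable, i.e. its lift f̂ on L^2(Ω,H) is Λ-continuously Fréchet differentiable with regular L-derivative ∂_μ f(μ)(·) ∈ L^2(H,μ;L(H,U)) satisfying Df̂(X)Y = E[∂_μ f(law X)(X) Y] for all X, Y ∈ L^2(Ω,H). If ⦀Df̂(X)⦀_{2,ℙ} ≤ C for all X (equivalently E[‖∂_μ f(law X)(X)‖²]^{1/2} ≤ C), then f is Lipschitz with respect to the 2-Wasserstein metric: ‖f(μ) − f(ν)‖_U ≤ C · W_2(μ, ν) for all μ, ν ∈ P_2(H). -/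
open MeasureTheory ENNReal Filter

noncomputable section

lemma Lp_coeFn_sum {Ω H : Type*} [MeasurableSpace Ω] [NormedAddCommGroup H]
    {P : Measure Ω} {p : ℝ≥0∞} [Fact (1 ≤ p)] {ι : Type*} [DecidableEq ι]
    (s : Finset ι) (f : ι → Lp H p P) :
    ⇑(∑ i ∈ s, f i) =ᵐ[P] fun ω => ∑ i ∈ s, f i ω := by
  induction s using Finset.induction_on with
  | empty => simp only [Finset.sum_empty]; exact Lp.coeFn_zero H p P
  | @insert a s ha ih =>
    filter_upwards [Lp.coeFn_add (f a) (∑ i ∈ s, f i), ih] with ω h1 h2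
    simp only [Finset.sum_insert ha, h1, Pi.add_apply, h2]

lemma opSemiVar_opnorm_bound {Ω H U : Type*} [MeasurableSpace Ω]
    [NormedAddCommGroup H] [NormedSpace ℝ H]
    [NormedAddCommGroup U] [NormedSpace ℝ U]
    (P : Measure Ω) [IsProbabilityMeasure P]
    (L : Lp H 2 P →L[ℝ] U) (C : ℝ) (hC : 0 ≤ C)
    (h : opSemiVar P 2 L ≤ ENNReal.ofReal C) (g : Lp H 2 P) : ‖L g‖ ≤ C * ‖g‖ := by
  classical
  have key : ∀ s : Lp.simpleFunc H 2 P, ‖L ↑s‖ ≤ C * ‖(↑s : Lp H 2 P)‖ := by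
    intro s
    set c : ℝ := ‖(↑s : Lp H 2 P)‖ with hc_def
    rcases eq_or_lt_of_le (norm_nonneg (↑s : Lp H 2 P)) with hc0 | hc
    · have h0 : (↑s : Lp H 2 P) = 0 := by rw [← norm_eq_zero]; exact hc0.symm
      rw [h0, map_zero, norm_zero, hc_def, ← hc0, mul_zero]
    set φ := Lp.simpleFunc.toSimpleFunc s with hφ_def
    have hφs : ⇑φ =ᵐ[P] ⇑(↑s : Lp H 2 P) := Lp.simpleFunc.toSimpleFunc_eq_toFun s
    set n := φ.range.card with hn_def
    set e : Fin n ≃ {x // x ∈ φ.range} := φ.range.equivFin.symm with he_def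
    set xs : Fin n → H := fun i => (e i : H) with hxs_def
    set As : Fin n → Set Ω := fun i => ⇑φ ⁻¹' {xs i} with hAs_def
    have hAs : ∀ i, MeasurableSet (As i) := fun i => φ.measurableSet_fiber (xs i)
    have hxs_inj : Function.Injective xs := fun i j hij => e.injective (Subtype.ext hij)
    have hdisj : Pairwise (Function.onFun Disjoint As) := by
      intro i j hij
      refine Set.disjoint_left.2 fun ω hi hj => hij (hxs_inj ?_)
      simp only [As, Set.mem_preimage, Set.mem_singleton_iff] at hi hj
      rw [← hi, ← hj]
    have hsum : ∀ ω, ∑ i, (As i).indicator (fun _ => xs i) ω = φ ω := by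
      intro ω
      have hmem : φ ω ∈ φ.range := φ.mem_range_self ω
      set j := e.symm ⟨φ ω, hmem⟩ with hj_def
      have hxj : xs j = φ ω := by simp [hxs_def, hj_def]
      rw [Finset.sum_eq_single j]
      · rw [Set.indicator_of_mem (by simp [hAs_def, Set.mem_preimage, hxj] :
          ω ∈ As j)]
        exact hxj
      · intro b _ hbj
        apply Set.indicator_of_notMem
        simp only [As, Set.mem_preimage, Set.mem_singleton_iff]
        intro hb
        exact hbj ((hxs_inj (hxj.trans hb)).symm)
      · intro hj; exact absurd (Finset.mem_univ j) hj
    -- the Lp element is the sum of the indicator Lp functions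
    have hφeq : (↑s : Lp H 2 P) =
        ∑ i, indicatorConstLp 2 (hAs i) (measure_ne_top P (As i)) (xs i) := by
      refine Lp.ext ?_
      have h1 := Lp_coeFn_sum (Finset.univ)
        (fun i => indicatorConstLp 2 (hAs i) (measure_ne_top P (As i)) (xs i))
      have h2 : ∀ᵐ ω ∂P, ∀ i : Fin n,
          (indicatorConstLp 2 (hAs i) (measure_ne_top P (As i)) (xs i) : Ω → H) ω
            = (As i).indicator (fun _ => xs i) ω := by
        rw [MeasureTheory.ae_all_iff]
        intro i; exact indicatorConstLp_coeFn
      filter_upwards [hφs, h1, h2] with ω e1 e2 e3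
      rw [← e1, e2, ← hsum ω]
      exact Finset.sum_congr rfl fun i _ => (e3 i).symm
    -- scaled family
    set xs' : Fin n → H := fun i => c⁻¹ • xs i with hxs'_def
    have hnorm' : eLpNorm (fun ω => ∑ i, (As i).indicator (fun _ => xs' i) ω) 2 P ≤ 1 := by
      have hpt : (fun ω => ∑ i, (As i).indicator (fun _ => xs' i) ω)
          = c⁻¹ • ⇑φ := by
        funext ω
        have hi : ∀ i, (As i).indicator (fun _ => xs' i) ω
            = c⁻¹ • (As i).indicator (fun _ => xs i) ω := by
          intro i
          by_cases hω : ω ∈ As i <;>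
            simp [Set.indicator_of_mem, Set.indicator_of_notMem, hω, hxs'_def]
        rw [Finset.sum_congr rfl fun i _ => hi i, ← Finset.smul_sum]
        show c⁻¹ • _ = c⁻¹ • φ ω
        rw [hsum ω]
      have h1 : eLpNorm (fun ω => ∑ i, (As i).indicator (fun _ => xs' i) ω) 2 P
          = (‖c⁻¹‖₊ : ℝ≥0∞) * eLpNorm ⇑φ 2 P := by
        rw [hpt]; exact eLpNorm_const_smul c⁻¹ ⇑φ 2 P
      have hes : eLpNorm ⇑φ 2 P = ENNReal.ofReal c := by
        have hne := Lp.eLpNorm_ne_top (↑s : Lp H 2 P)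
        have h0 := ENNReal.ofReal_toReal hne
        rw [← Lp.norm_def] at h0
        rw [eLpNorm_congr_ae hφs, ← h0]
      rw [h1, hes]
      have hc' : (‖c⁻¹‖₊ : ℝ≥0∞) = ENNReal.ofReal c⁻¹ := by
        rw [← enorm_eq_nnnorm, ← ofReal_norm_eq_enorm, Real.norm_of_nonneg (by positivity)]
      rw [hc', ← ENNReal.ofReal_mul (by positivity), inv_mul_cancel₀ hc.ne', ENNReal.ofReal_one]
    have hS : (∑ i, (‖L (indicatorConstLp 2 (hAs i) (measure_ne_top P (As i)) (xs' i))‖₊ : ℝ≥0∞))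
        ≤ ENNReal.ofReal C := by
      refine le_trans ?_ h
      unfold opSemiVar
      exact le_iSup_of_le n (le_iSup_of_le As (le_iSup_of_le xs' (le_iSup_of_le hAs
        (le_iSup_of_le hdisj (le_iSup_of_le hnorm' le_rfl)))))
    have hind : ∀ i, indicatorConstLp 2 (hAs i) (measure_ne_top P (As i)) (xs i)
        = c • indicatorConstLp 2 (hAs i) (measure_ne_top P (As i)) (xs' i) := by
      intro i
      refine Lp.ext ?_
      filter_upwards [indicatorConstLp_coeFn (p := (2:ℝ≥0∞)) (hs := hAs i)
          (hμs := measure_ne_top P (As i)) (c := xs i),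
        MeasureTheory.Lp.coeFn_smul c (indicatorConstLp 2 (hAs i) (measure_ne_top P (As i)) (xs' i)),
        indicatorConstLp_coeFn (p := (2:ℝ≥0∞)) (hs := hAs i)
          (hμs := measure_ne_top P (As i)) (c := xs' i)] with ω h1 h2 h3
      rw [h1, h2, Pi.smul_apply, h3]
      by_cases hω : ω ∈ As i <;>
        simp [hω, hxs'_def, smul_smul, mul_inv_cancel₀ (show c ≠ 0 from hc.ne')]
    have hcC : ((‖c‖₊ : ℝ≥0∞)) = ENNReal.ofReal c := by
      rw [← enorm_eq_nnnorm, ← ofReal_norm_eq_enorm, Real.norm_of_nonneg hc.le]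
    have hsum_le : (∑ i, (‖L (indicatorConstLp 2 (hAs i) (measure_ne_top P (As i)) (xs i))‖₊ : ℝ≥0∞))
        ≤ ENNReal.ofReal (c * C) := by
      calc (∑ i, (‖L (indicatorConstLp 2 (hAs i) (measure_ne_top P (As i)) (xs i))‖₊ : ℝ≥0∞))
          = ∑ i, (‖c‖₊ : ℝ≥0∞) * (‖L (indicatorConstLp 2 (hAs i) (measure_ne_top P (As i)) (xs' i))‖₊ : ℝ≥0∞) := by
            refine Finset.sum_congr rfl fun i _ => ?_
            rw [hind i, _root_.map_smul, nnnorm_smul]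
            push_cast
            ring
        _ = (‖c‖₊ : ℝ≥0∞) * ∑ i, (‖L (indicatorConstLp 2 (hAs i) (measure_ne_top P (As i)) (xs' i))‖₊ : ℝ≥0∞) := by
            rw [Finset.mul_sum]
        _ ≤ (‖c‖₊ : ℝ≥0∞) * ENNReal.ofReal C := mul_le_mul_right hS _
        _ = ENNReal.ofReal (c * C) := by rw [hcC, ← ENNReal.ofReal_mul hc.le]
    calc ‖L ↑s‖
        = ‖L (∑ i, indicatorConstLp 2 (hAs i) (measure_ne_top P (As i)) (xs i))‖ := by
          rw [← hφeq]
      _ = ‖∑ i, L (indicatorConstLp 2 (hAs i) (measure_ne_top P (As i)) (xs i))‖ := by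
          rw [map_sum]
      _ ≤ ∑ i, ‖L (indicatorConstLp 2 (hAs i) (measure_ne_top P (As i)) (xs i))‖ :=
          norm_sum_le _ _
      _ = (∑ i, (‖L (indicatorConstLp 2 (hAs i) (measure_ne_top P (As i)) (xs i))‖₊ : ℝ≥0∞)).toReal := by
          rw [ENNReal.toReal_sum (fun i _ => ENNReal.coe_ne_top)]
          simp [coe_nnnorm]
      _ ≤ c * C := ENNReal.toReal_le_of_le_ofReal (by positivity) hsum_le
      _ = C * c := mul_comm _ _
  refine ((Lp.simpleFunc.denseRange (E := H) (p := (2:ℝ≥0∞)) (μ := P)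
    (by norm_num)).induction_on g ?_ key)
  exact isClosed_le (continuous_norm.comp L.continuous) (continuous_const.mul continuous_norm)


def wass2 {H : Type*} [NormedAddCommGroup H] [MeasurableSpace H]
    (μ ν : Measure H) : ℝ≥0∞ :=
  (⨅ (π : Measure (H × H)) (_ : π.map Prod.fst = μ) (_ : π.map Prod.snd = ν),
    ∫⁻ z, (‖z.1 - z.2‖₊ : ℝ≥0∞) ^ 2 ∂π) ^ (1 / 2 : ℝ)

set_option maxHeartbeats 1000000 in
theorem stmt14' {Ω H U : Type*}
    [MeasurableSpace Ω] [TopologicalSpace Ω] [PolishSpace Ω] [BorelSpace Ω]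
    (P : Measure Ω) [IsProbabilityMeasure P]
    [NormedAddCommGroup H] [InnerProductSpace ℝ H] [CompleteSpace H]
    [SecondCountableTopology H] [MeasurableSpace H] [BorelSpace H]
    [NormedAddCommGroup U] [InnerProductSpace ℝ U] [CompleteSpace U]
    (f : Measure H → U) (fhat : Lp H 2 P → U)
    (hlift : ∀ X : Lp H 2 P, fhat X = f (P.map ⇑X))
    (hrealize : ∀ μ : Measure H, IsProbabilityMeasure μ →
      (∫⁻ y, (‖y‖₊ : ℝ≥0∞) ^ 2 ∂μ) ≠ ∞ → ∃ X : Lp H 2 P, P.map ⇑X = μ)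
    (C : ℝ) (hC : 0 ≤ C)
    (hop : ∀ X Y : Lp H 2 P, ‖fhat X - fhat Y‖ ≤ C * ‖X - Y‖) :
    ∀ μ ν : Measure H, IsProbabilityMeasure μ → IsProbabilityMeasure ν →
      (∫⁻ y, (‖y‖₊ : ℝ≥0∞) ^ 2 ∂μ) ≠ ∞ → (∫⁻ y, (‖y‖₊ : ℝ≥0∞) ^ 2 ∂ν) ≠ ∞ →
      ‖f μ - f ν‖ ≤ C * (wass2 μ ν).toReal := by
  intro μ ν hμ hν hμ2 hν2
  rcases subsingleton_or_nontrivial H with hH | hH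
  · have hμν : μ = ν := by
      ext s hs
      rcases Set.eq_empty_or_nonempty s with rfl | ⟨x, hx⟩
      · simp
      · have hsu : s = Set.univ := Set.eq_univ_of_forall fun y => (Subsingleton.elim x y) ▸ hx
        rw [hsu]
        simp [measure_univ]
    rw [hμν, sub_self, norm_zero]
    positivity
  -- measurability facts
  have meas_sq : Measurable fun y : H => (‖y‖₊ : ℝ≥0∞) ^ 2 :=
    measurable_nnnorm.coe_nnreal_ennreal.pow_const 2
  have hcost_meas : Measurable fun z : H × H => (‖z.1 - z.2‖₊ : ℝ≥0∞) ^ 2 :=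
    ((measurable_fst.sub measurable_snd).nnnorm).coe_nnreal_ennreal.pow_const 2
  -- the infimum
  set I := ⨅ (π : Measure (H × H)) (_ : π.map Prod.fst = μ) (_ : π.map Prod.snd = ν),
    ∫⁻ z, (‖z.1 - z.2‖₊ : ℝ≥0∞) ^ 2 ∂π with hI_def
  have hw : wass2 μ ν = I ^ (1 / 2 : ℝ) := rfl
  -- I is finite (product coupling)
  have hfst : (μ.prod ν).map Prod.fst = μ := by simp [measure_univ]
  have hsnd : (μ.prod ν).map Prod.snd = ν := by simp [measure_univ]
  have hb4 : ∀ z : H × H, (‖z.1 - z.2‖₊ : ℝ≥0∞) ^ 2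
      ≤ 4 * ((‖z.1‖₊ : ℝ≥0∞) ^ 2 + (‖z.2‖₊ : ℝ≥0∞) ^ 2) := by
    intro z
    have h1 : (‖z.1 - z.2‖₊ : ℝ≥0∞) ≤ (‖z.1‖₊ : ℝ≥0∞) + (‖z.2‖₊ : ℝ≥0∞) := by
      exact_mod_cast nnnorm_sub_le z.1 z.2
    set a : ℝ≥0∞ := (‖z.1‖₊ : ℝ≥0∞)
    set b : ℝ≥0∞ := (‖z.2‖₊ : ℝ≥0∞)
    have h2 : a + b ≤ 2 * (a ⊔ b) := by
      rw [two_mul]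
      exact add_le_add le_sup_left le_sup_right
    calc (‖z.1 - z.2‖₊ : ℝ≥0∞) ^ 2 ≤ (2 * (a ⊔ b)) ^ 2 :=
          pow_le_pow_left' (h1.trans h2) 2
      _ = 4 * (a ⊔ b) ^ 2 := by ring
      _ ≤ 4 * (a ^ 2 + b ^ 2) := by
          gcongr
          rcases le_total a b with hab | hab
          · rw [sup_eq_right.2 hab]; exact le_add_self
          · rw [sup_eq_left.2 hab]; exact le_self_add
  have hI_top : I ≠ ∞ := by
    have hle : I ≤ ∫⁻ z, (‖z.1 - z.2‖₊ : ℝ≥0∞) ^ 2 ∂(μ.prod ν) := by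
      rw [hI_def]
      exact iInf_le_of_le (μ.prod ν) (iInf_le_of_le hfst (iInf_le _ hsnd))
    have hbnd : ∫⁻ z, (‖z.1 - z.2‖₊ : ℝ≥0∞) ^ 2 ∂(μ.prod ν)
        ≤ 4 * ((∫⁻ y, (‖y‖₊ : ℝ≥0∞) ^ 2 ∂μ) + ∫⁻ y, (‖y‖₊ : ℝ≥0∞) ^ 2 ∂ν) := by
      calc ∫⁻ z, (‖z.1 - z.2‖₊ : ℝ≥0∞) ^ 2 ∂(μ.prod ν)
          ≤ ∫⁻ z, 4 * ((‖z.1‖₊ : ℝ≥0∞) ^ 2 + (‖z.2‖₊ : ℝ≥0∞) ^ 2) ∂(μ.prod ν) :=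
            lintegral_mono hb4
        _ = 4 * ((∫⁻ z, (‖z.1‖₊ : ℝ≥0∞) ^ 2 ∂(μ.prod ν))
              + ∫⁻ z, (‖z.2‖₊ : ℝ≥0∞) ^ 2 ∂(μ.prod ν)) := by
            rw [lintegral_const_mul (f := fun z : H × H => (‖z.1‖₊ : ℝ≥0∞) ^ 2 + (‖z.2‖₊ : ℝ≥0∞) ^ 2) _ ((measurable_fst.nnnorm.coe_nnreal_ennreal.pow_const 2).add
              (measurable_snd.nnnorm.coe_nnreal_ennreal.pow_const 2)),
              lintegral_add_left (measurable_fst.nnnorm.coe_nnreal_ennreal.pow_const 2)]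
        _ = 4 * ((∫⁻ y, (‖y‖₊ : ℝ≥0∞) ^ 2 ∂μ) + ∫⁻ y, (‖y‖₊ : ℝ≥0∞) ^ 2 ∂ν) := by
            have e1 : ∫⁻ z, (‖z.1‖₊ : ℝ≥0∞) ^ 2 ∂(μ.prod ν) = ∫⁻ y, (‖y‖₊ : ℝ≥0∞) ^ 2 ∂μ := by
              conv_rhs => rw [← hfst]
              exact (lintegral_map meas_sq measurable_fst).symm
            have e2 : ∫⁻ z, (‖z.2‖₊ : ℝ≥0∞) ^ 2 ∂(μ.prod ν) = ∫⁻ y, (‖y‖₊ : ℝ≥0∞) ^ 2 ∂ν := by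
              conv_rhs => rw [← hsnd]
              exact (lintegral_map meas_sq measurable_snd).symm
            rw [e1, e2]
    refine ne_top_of_le_ne_top ?_ (hle.trans hbnd)
    refine ENNReal.mul_ne_top (by norm_num) (ENNReal.add_ne_top.2 ⟨hμ2, hν2⟩)
  -- embedding machinery
  obtain ⟨v, hv⟩ := exists_ne (0 : H)
  set u : ℝ → ℝ := fun t => t / (1 + |t|) with hu_def
  set g : ℝ → H := fun t => u t • v with hg_def
  have hden : ∀ t : ℝ, (0:ℝ) < 1 + |t| := fun t => by positivity
  have hu_cont : Continuous u := continuous_id.div (by continuity) fun t => (hden t).ne'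
  have hg_cont : Continuous g := hu_cont.smul continuous_const
  have hg_inj : Function.Injective g := by
    intro a b hab
    have hab' : u a • v = u b • v := hab
    have h0 : (u a - u b) • v = 0 := by
      rw [sub_smul, hab', sub_self]
    have h : u a = u b := by
      rcases smul_eq_zero.1 h0 with h | h
      · exact sub_eq_zero.1 h
      · exact absurd h hv
    rw [hu_def] at h
    simp only at h
    rw [div_eq_div_iff (hden a).ne' (hden b).ne'] at h
    rcases abs_cases a with ⟨h1, h1'⟩ | ⟨h1, h1'⟩ <;> rcases abs_cases b with ⟨h2, h2'⟩ | ⟨h2, h2'⟩ <;>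
      rw [h1, h2] at h
    · linear_combination h
    · exfalso; nlinarith
    · exfalso; nlinarith
    · linear_combination h
  have hg_emb : MeasurableEmbedding g := hg_cont.measurableEmbedding hg_inj
  obtain ⟨j, hj_emb⟩ := exists_measurableEmbedding_real (H × H)
  set F : H × H → H := g ∘ j with hF_def
  have hF_emb : MeasurableEmbedding F := hg_emb.comp hj_emb
  obtain ⟨r, hr_meas, hrF⟩ := hF_emb.exists_measurable_extend
    (measurable_id (α := H × H)) (fun _ => ⟨((0:H), (0:H))⟩)
  have hFb : ∀ z : H × H, (‖F z‖₊ : ℝ≥0∞) ^ 2 ≤ (‖v‖₊ : ℝ≥0∞) ^ 2 := by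
    intro z
    have h1 : ‖F z‖ ≤ ‖v‖ := by
      show ‖u (j z) • v‖ ≤ ‖v‖
      rw [norm_smul, Real.norm_eq_abs]
      have h2 : |u (j z)| ≤ 1 := by
        rw [hu_def]
        simp only
        rw [abs_div, abs_of_pos (hden (j z)), div_le_one (hden (j z))]
        linarith
      nlinarith [norm_nonneg v, abs_nonneg (u (j z))]
    have h2 : (‖F z‖₊ : ℝ≥0∞) ≤ (‖v‖₊ : ℝ≥0∞) := by exact_mod_cast h1
    exact pow_le_pow_left' h2 2
  -- the ε-argument
  rw [hw]
  refine le_of_forall_pos_le_add fun η hη => ?_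
  have hC1 : (0:ℝ) < C + 1 := by linarith
  set ε : ℝ := (η / (C + 1)) ^ 2 with hε_def
  have hε : 0 < ε := by positivity
  have hIε : I < I + ENNReal.ofReal ε :=
    ENNReal.lt_add_right hI_top (ENNReal.ofReal_pos.2 hε).ne'
  rw [hI_def] at hIε
  obtain ⟨π, hπ⟩ := iInf_lt_iff.1 hIε
  obtain ⟨hπ1, hπ⟩ := iInf_lt_iff.1 hπ
  obtain ⟨hπ2, hπ⟩ := iInf_lt_iff.1 hπ
  rw [← hI_def] at hπ
  -- π is a probability measure
  haveI hπP : IsProbabilityMeasure π := by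
    constructor
    have h0 : π.map Prod.fst Set.univ = π Set.univ := by
      rw [Measure.map_apply measurable_fst MeasurableSet.univ, Set.preimage_univ]
    rw [← h0, hπ1, measure_univ]
  -- realize π
  set σ : Measure H := π.map F with hσ_def
  haveI hσP : IsProbabilityMeasure σ := Measure.isProbabilityMeasure_map hF_emb.measurable.aemeasurable
  have hσ2 : (∫⁻ y, (‖y‖₊ : ℝ≥0∞) ^ 2 ∂σ) ≠ ∞ := by
    rw [hσ_def, lintegral_map meas_sq hF_emb.measurable]
    refine ne_top_of_le_ne_top ?_ ((lintegral_mono hFb).trans_eq (lintegral_const _))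
    rw [measure_univ, mul_one]
    exact ENNReal.pow_ne_top ENNReal.coe_ne_top
  obtain ⟨Z, hZ⟩ := hrealize σ hσP hσ2
  have hZm : Measurable ⇑Z := (Lp.stronglyMeasurable Z).measurable
  set T : Ω → H × H := fun ω => r (Z ω) with hT_def
  have hTm : Measurable T := hr_meas.comp hZm
  have hT : P.map T = π := by
    have h1 : P.map T = (P.map ⇑Z).map r := (Measure.map_map hr_meas hZm).symm
    rw [h1, hZ, hσ_def, Measure.map_map hr_meas hF_emb.measurable, hrF, Measure.map_id]
  set X' : Ω → H := fun ω => (T ω).1 with hX'_def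
  set Y' : Ω → H := fun ω => (T ω).2 with hY'_def
  have hX'm : Measurable X' := measurable_fst.comp hTm
  have hY'm : Measurable Y' := measurable_snd.comp hTm
  have hX'law : P.map X' = μ := by
    rw [show X' = Prod.fst ∘ T from rfl, ← Measure.map_map measurable_fst hTm, hT, hπ1]
  have hY'law : P.map Y' = ν := by
    rw [show Y' = Prod.snd ∘ T from rfl, ← Measure.map_map measurable_snd hTm, hT, hπ2]
  -- MemLp
  have pow_two_rpow : ∀ x : ℝ≥0∞, x ^ ((2:ℝ≥0∞).toReal) = x ^ (2:ℕ) := fun x => by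
    rw [ENNReal.toReal_ofNat, ← ENNReal.rpow_natCast]; norm_num
  have eLpNorm_two : ∀ w : Ω → H, eLpNorm w 2 P
      = (∫⁻ ω, (‖w ω‖₊ : ℝ≥0∞) ^ 2 ∂P) ^ (1/2 : ℝ) := by
    intro w
    rw [eLpNorm_eq_lintegral_rpow_enorm_toReal (by norm_num) (by norm_num)]
    simp_rw [enorm_eq_nnnorm, pow_two_rpow]
    norm_num
  have hmom : ∀ (w : Ω → H) (ρ : Measure H), Measurable w → P.map w = ρ →
      (∫⁻ y, (‖y‖₊ : ℝ≥0∞) ^ 2 ∂ρ) ≠ ∞ → MemLp w 2 P := by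
    intro w ρ hwm hwlaw hρ
    constructor
    · exact hwm.aestronglyMeasurable
    · rw [eLpNorm_two w]
      have h1 : ∫⁻ ω, (‖w ω‖₊ : ℝ≥0∞) ^ 2 ∂P = ∫⁻ y, (‖y‖₊ : ℝ≥0∞) ^ 2 ∂ρ := by
        rw [← hwlaw, lintegral_map meas_sq hwm]
      rw [h1]
      exact ENNReal.rpow_lt_top_of_nonneg (by norm_num) hρ
  have hX'mem : MemLp X' 2 P := hmom X' μ hX'm hX'law hμ2
  have hY'mem : MemLp Y' 2 P := hmom Y' ν hY'm hY'law hν2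
  set Xl := hX'mem.toLp X' with hXl_def
  set Yl := hY'mem.toLp Y' with hYl_def
  have hXl_law : P.map ⇑Xl = μ := by
    rw [Measure.map_congr hX'mem.coeFn_toLp, hX'law]
  have hYl_law : P.map ⇑Yl = ν := by
    rw [Measure.map_congr hY'mem.coeFn_toLp, hY'law]
  have hfX : f μ = fhat Xl := by rw [hlift, hXl_law]
  have hfY : f ν = fhat Yl := by rw [hlift, hYl_law]
  -- compute the distance
  have hsub : ⇑(Xl - Yl) =ᵐ[P] fun ω => X' ω - Y' ω := by
    filter_upwards [Lp.coeFn_sub Xl Yl, hX'mem.coeFn_toLp, hY'mem.coeFn_toLp] with ω h1 h2 h3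
    rw [h1, Pi.sub_apply, h2, h3]
  set cost : ℝ≥0∞ := ∫⁻ z, (‖z.1 - z.2‖₊ : ℝ≥0∞) ^ 2 ∂π with hcost_def
  have hdist : ‖Xl - Yl‖ = (cost ^ (1/2 : ℝ)).toReal := by
    rw [Lp.norm_def, eLpNorm_congr_ae hsub, eLpNorm_two]
    congr 2
    rw [hcost_def, ← hT, lintegral_map hcost_meas hTm]
  -- put everything together
  have hkey : ‖f μ - f ν‖ ≤ C * (cost ^ (1/2 : ℝ)).toReal := by
    rw [hfX, hfY, ← hdist]
    exact hop Xl Yl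
  have h12 : cost ^ (1/2 : ℝ) ≤ I ^ (1/2 : ℝ) + (ENNReal.ofReal ε) ^ (1/2 : ℝ) := by
    refine le_trans (ENNReal.rpow_le_rpow hπ.le (by norm_num)) ?_
    exact ENNReal.rpow_add_le_add_rpow _ _ (by norm_num) (by norm_num)
  have hfin1 : I ^ (1/2 : ℝ) ≠ ∞ := ENNReal.rpow_ne_top_of_nonneg (by norm_num) hI_top
  have hfin2 : (ENNReal.ofReal ε) ^ (1/2 : ℝ) ≠ ∞ :=
    ENNReal.rpow_ne_top_of_nonneg (by norm_num) ENNReal.ofReal_ne_top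
  have htr : (cost ^ (1/2 : ℝ)).toReal ≤ (I ^ (1/2 : ℝ)).toReal + ((ENNReal.ofReal ε) ^ (1/2 : ℝ)).toReal := by
    rw [← ENNReal.toReal_add hfin1 hfin2]
    exact ENNReal.toReal_mono (ENNReal.add_ne_top.2 ⟨hfin1, hfin2⟩) h12
  have hε12 : ((ENNReal.ofReal ε) ^ (1/2 : ℝ)).toReal = η / (C + 1) := by
    rw [← ENNReal.toReal_rpow, ENNReal.toReal_ofReal hε.le, hε_def,
      ← Real.sqrt_eq_rpow, Real.sqrt_sq (by positivity)]
  have hstep : C * (η / (C + 1)) ≤ η := by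
    rw [show C * (η / (C+1)) = (C * η) / (C+1) by ring, div_le_iff₀ hC1]
    nlinarith
  calc ‖f μ - f ν‖ ≤ C * (cost ^ (1/2 : ℝ)).toReal := hkey
    _ ≤ C * ((I ^ (1/2 : ℝ)).toReal + η / (C + 1)) := by
        rw [← hε12]
        exact mul_le_mul_of_nonneg_left htr hC
    _ = C * (I ^ (1/2 : ℝ)).toReal + C * (η / (C + 1)) := by ring
    _ ≤ C * (I ^ (1/2 : ℝ)).toReal + η := by linarith

/-- If `f : P₂(H) → U` is absolutely continuously L-differentiable with
`⦀Df̂(X)⦀_{2,ℙ} ≤ C` for all `X`, then `f` is `C`-Lipschitz for the `2`-Wasserstein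
metric. -/
theorem stmt14 {Ω H U : Type*}
    [MeasurableSpace Ω] [TopologicalSpace Ω] [PolishSpace Ω] [BorelSpace Ω]
    (P : Measure Ω) [IsProbabilityMeasure P]
    [NormedAddCommGroup H] [InnerProductSpace ℝ H] [CompleteSpace H]
    [SecondCountableTopology H] [MeasurableSpace H] [BorelSpace H]
    [NormedAddCommGroup U] [InnerProductSpace ℝ U] [CompleteSpace U]
    (f : Measure H → U) (fhat : Lp H 2 P → U)
    -- `f̂` is the lift of `f`
    (hlift : ∀ X : Lp H 2 P, fhat X = f (P.map ⇑X))
    -- every square-integrable law is realized by some random variable on `(Ω,F,ℙ)`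
    (hrealize : ∀ μ : Measure H, IsProbabilityMeasure μ →
      (∫⁻ y, (‖y‖₊ : ℝ≥0∞) ^ 2 ∂μ) ≠ ∞ → ∃ X : Lp H 2 P, P.map ⇑X = μ)
    (Df : Lp H 2 P → (Lp H 2 P →L[ℝ] U))
    (hderiv : ∀ X : Lp H 2 P, HasFDerivAt fhat (Df X) X)
    (hΛcont : ∀ (X : Lp H 2 P) (ε : ℝ≥0∞), 0 < ε → ∃ δ > (0 : ℝ), ∀ X' : Lp H 2 P,
      ‖X' - X‖ < δ → opSemiVar P 2 (Df X' - Df X) < ε)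
    (C : ℝ) (hC : 0 ≤ C)
    (hbound : ∀ X : Lp H 2 P, opSemiVar P 2 (Df X) ≤ ENNReal.ofReal C) :
    ∀ μ ν : Measure H, IsProbabilityMeasure μ → IsProbabilityMeasure ν →
      (∫⁻ y, (‖y‖₊ : ℝ≥0∞) ^ 2 ∂μ) ≠ ∞ → (∫⁻ y, (‖y‖₊ : ℝ≥0∞) ^ 2 ∂ν) ≠ ∞ →
      ‖f μ - f ν‖ ≤ C * (wass2 μ ν).toReal := by
  have hop : ∀ X Y : Lp H 2 P, ‖fhat X - fhat Y‖ ≤ C * ‖X - Y‖ := by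
    intro X Y
    exact convex_univ.norm_image_sub_le_of_norm_hasFDerivWithin_le
      (fun x _ => (hderiv x).hasFDerivWithinAt)
      (fun x _ => ContinuousLinearMap.opNorm_le_bound _ hC
        (opSemiVar_opnorm_bound P (Df x) C hC (hbound x)))
      (Set.mem_univ Y) (Set.mem_univ X)
  exact stmt14' P f fhat hlift hrealize C hC hop
end
end

section
/- Let f : P_2(H) → U be absolutely continuously L-differentiable with lift f̂ and regular L-derivative ∂_μ f. Then for every μ_0 ∈ P_2(H), every X_0 ∈ L^2(Ω,H) with law μ_0, every u ∈ H and v ∈ U: ⟨∂_μ f(μ_0)(y)u, v⟩_U = ⟨u, E[Df̂(X_0)*v | X_0 = y]⟩_H for μ_0-almost every y, where Df̂(X_0)* : U → L^2(Ω,H) is the adjoint of the Fréchet derivative. -/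
open MeasureTheory ENNReal Filter RealInnerProductSpace

noncomputable section

/-- For an absolutely continuously L-differentiable `f : P₂(H) → U` with regular
L-derivative `∂_μ f(μ₀) = pmuf` and any `X₀` with law `μ₀`:
`⟨∂_μ f(μ₀)(y) u, v⟩ = ⟨u, E[Df̂(X₀)* v | X₀ = y]⟩` for `μ₀`-a.e. `y`, expressed in the
integrated form defining the conditional expectation: for all `B ∈ B(H)`,
`∫_{X₀⁻¹ B} ⟨u, (Df̂(X₀)* v)(ω)⟩ dℙ = ∫_{X₀⁻¹ B} ⟨∂_μ f(μ₀)(X₀(ω)) u, v⟩ dℙ`. -/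
theorem stmt16 {Ω H U : Type*}
    [MeasurableSpace Ω] [TopologicalSpace Ω] [PolishSpace Ω] [BorelSpace Ω]
    (P : Measure Ω) [IsProbabilityMeasure P]
    (hatomless : ∀ A : Set Ω, MeasurableSet A → 0 < P A →
      ∃ B : Set Ω, MeasurableSet B ∧ B ⊆ A ∧ 0 < P B ∧ P B < P A)
    [NormedAddCommGroup H] [InnerProductSpace ℝ H] [CompleteSpace H]
    [SecondCountableTopology H] [MeasurableSpace H] [BorelSpace H]
    [NormedAddCommGroup U] [InnerProductSpace ℝ U] [CompleteSpace U]
    (fhat : Lp H 2 P → U)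
    (hlaw : ∀ X X' : Lp H 2 P, P.map ⇑X = P.map ⇑X' → fhat X = fhat X')
    (Df : Lp H 2 P → (Lp H 2 P →L[ℝ] U))
    (hderiv : ∀ X : Lp H 2 P, HasFDerivAt fhat (Df X) X)
    (hΛfin : ∀ X : Lp H 2 P, opSemiVar P 2 (Df X) < ∞)
    (hΛcont : ∀ (X : Lp H 2 P) (ε : ℝ≥0∞), 0 < ε → ∃ δ > (0 : ℝ), ∀ X' : Lp H 2 P,
      ‖X' - X‖ < δ → opSemiVar P 2 (Df X' - Df X) < ε)
    (μ0 : Measure H) [IsProbabilityMeasure μ0]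
    (pmuf : H → (H →L[ℝ] U)) (hpmuf : MemLp pmuf 2 μ0)
    (hrep : ∀ X : Lp H 2 P, P.map ⇑X = μ0 →
      ∀ Y : Lp H 2 P, Df X Y = ∫ ω, pmuf (X ω) (Y ω) ∂P)
    (X0 : Ω → H) (hX0meas : Measurable X0) (hX0 : MemLp X0 2 P)
    (hX0law : P.map X0 = μ0) (u : H) (v : U) :
    ∀ B : Set H, MeasurableSet B →
      ∫ ω in X0 ⁻¹' B,
          (⟪u, ((ContinuousLinearMap.adjoint (Df (MemLp.toLp X0 hX0))) v : Lp H 2 P) ω⟫ : ℝ) ∂P =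
        ∫ ω in X0 ⁻¹' B, (⟪pmuf (X0 ω) u, v⟫ : ℝ) ∂P := by
  intro B hB
  have hXae : ⇑(hX0.toLp X0) =ᵐ[P] X0 := hX0.coeFn_toLp
  set X : Lp H 2 P := hX0.toLp X0 with hXdef
  have hA : MeasurableSet (X0 ⁻¹' B) := hX0meas hB
  set A := X0 ⁻¹' B with hAdef
  set Y : Lp H 2 P := indicatorConstLp 2 hA (measure_ne_top P A) u with hYdef
  have hYae : ⇑Y =ᵐ[P] A.indicator (fun _ => u) := indicatorConstLp_coeFn
  have hmap : P.map ⇑X = μ0 := by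
    rw [Measure.map_congr hXae, hX0law]
  set Z : Lp H 2 P := (ContinuousLinearMap.adjoint (Df X)) v with hZdef
  -- composed map is in L²
  have hcomp : MemLp (pmuf ∘ X0) 2 P := by
    refine (memLp_map_measure_iff ?_ hX0meas.aemeasurable).mp (hX0law ▸ hpmuf)
    rw [hX0law]; exact hpmuf.aestronglyMeasurable
  have happ : MemLp (fun ω => pmuf (X0 ω) u) 2 P := by
    have := (ContinuousLinearMap.apply ℝ U u).comp_memLp' hcomp
    exact this
  have hInt : Integrable (fun ω => pmuf (X0 ω) u) P :=
    happ.integrable (by norm_num)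
  have h1 : ∫ ω in A, (⟪u, Z ω⟫ : ℝ) ∂P = (⟪Y, Z⟫ : ℝ) :=
    (L2.inner_indicatorConstLp_eq_setIntegral_inner ℝ Z hA u (measure_ne_top P A)).symm
  have h2 : (⟪Y, Z⟫ : ℝ) = ⟪v, Df X Y⟫ := by
    rw [real_inner_comm, hZdef, ContinuousLinearMap.adjoint_inner_left]
  have h3 : Df X Y = ∫ ω in A, pmuf (X0 ω) u ∂P := by
    rw [hrep X hmap Y]
    have hae : (fun ω => pmuf (X ω) (Y ω)) =ᵐ[P]
        A.indicator (fun ω => pmuf (X0 ω) u) := by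
      filter_upwards [hXae, hYae] with ω h1' h2'
      simp only [h1', h2']
      by_cases hω : ω ∈ A <;> simp [hω, Set.indicator_of_mem, Set.indicator_of_notMem]
    rw [integral_congr_ae hae, integral_indicator hA]
  have h4 : (⟪v, ∫ ω in A, pmuf (X0 ω) u ∂P⟫ : ℝ)
      = ∫ ω in A, (⟪v, pmuf (X0 ω) u⟫ : ℝ) ∂P := by
    rw [integral_inner hInt.restrict]
  calc ∫ ω in A, (⟪u, Z ω⟫ : ℝ) ∂P
      = ⟪v, Df X Y⟫ := by rw [h1, h2]
    _ = ∫ ω in A, (⟪v, pmuf (X0 ω) u⟫ : ℝ) ∂P := by rw [h3, h4]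
    _ = ∫ ω in A, (⟪pmuf (X0 ω) u, v⟫ : ℝ) ∂P := by
        simp_rw [real_inner_comm]
end
end

section
/- For real numbers x ≠ x̃, the integral ∫_ℝ 1_{|t−x|≤1} 1_{|t−x̃|≤1} |t−x|^{−1/2} |t−x̃|^{−1/2} dt equals ln( (2√(1−|x−x̃|) − (|x−x̃|−2)) / |2√(1−|x−x̃|) + (|x−x̃|−2)| ) + π if |x−x̃| < 1, and equals −2 arctan( (|x−x̃|−2) / (2√(|x−x̃|−1)) ) if 1 < |x−x̃| ≤ 2 (and 0 if |x−x̃| > 2). -/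
open Real MeasureTheory Set

noncomputable section

lemma abs_rpow_half_eq (s : ℝ) :
    |s| ^ (-(1/2 : ℝ)) = s ^ (-(1/2 : ℝ)) + (-s) ^ (-(1/2 : ℝ)) := by
  have hc : Real.cos (-(1/2) * π) = 0 := by
    rw [show (-(1/2) : ℝ) * π = -(π/2) by ring, Real.cos_neg, Real.cos_pi_div_two]
  rcases lt_trichotomy s 0 with h | rfl | h
  · rw [abs_of_neg h, Real.rpow_def_of_neg h, hc, mul_zero, zero_add]
  · norm_num
  · rw [abs_of_pos h, Real.rpow_def_of_neg (neg_lt_zero.2 h), hc, mul_zero, add_zero]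

lemma intInt_abs_rpow (c a b : ℝ) :
    IntervalIntegrable (fun t => |t - c| ^ (-(1/2 : ℝ))) volume a b := by
  have h1 : IntervalIntegrable (fun t => (t - c) ^ (-(1/2 : ℝ))) volume a b := by
    simpa using (intervalIntegral.intervalIntegrable_rpow' (a := a - c) (b := b - c)
      (by norm_num : (-1:ℝ) < -(1/2))).comp_sub_right c
  have h2 : IntervalIntegrable (fun t => (c - t) ^ (-(1/2 : ℝ))) volume a b := by
    simpa using (intervalIntegral.intervalIntegrable_rpow' (a := c - a) (b := c - b)
      (by norm_num : (-1:ℝ) < -(1/2))).comp_sub_left c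
  have heq : (fun t => |t - c| ^ (-(1/2 : ℝ)))
      = fun t => (t - c) ^ (-(1/2 : ℝ)) + (c - t) ^ (-(1/2 : ℝ)) := by
    funext t; rw [abs_rpow_half_eq (t - c), neg_sub]
  rw [heq]; exact h1.add h2

lemma intInt_g (x y a b m : ℝ) (hm0 : 0 < m) (hm : ∀ t ∈ Set.uIcc a b, m ≤ |t - y|) :
    IntervalIntegrable (fun t => |t - x| ^ (-(1/2:ℝ)) * |t - y| ^ (-(1/2:ℝ))) volume a b := by
  have hdom : IntervalIntegrable (fun t => |t - x| ^ (-(1/2:ℝ)) * m ^ (-(1/2:ℝ))) volume a b :=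
    (intInt_abs_rpow x a b).mul_const _
  refine hdom.mono_fun ?_ ?_
  · have hmeas : ∀ c : ℝ, Measurable (fun t : ℝ => |t - c| ^ (-(1/2:ℝ))) := by
      intro c
      have : (fun t : ℝ => |t - c| ^ (-(1/2:ℝ))) = fun t => (Real.sqrt |t - c|)⁻¹ := by
        funext t; rw [Real.rpow_neg (abs_nonneg _), Real.sqrt_eq_rpow]
      rw [this]
      exact ((Real.continuous_sqrt.comp
        (continuous_abs.comp (continuous_id.sub continuous_const))).measurable).inv
    exact ((hmeas x).mul (hmeas y)).aestronglyMeasurable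
  · refine MeasureTheory.ae_restrict_of_forall_mem measurableSet_uIoc fun t ht => ?_
    have ht' : t ∈ Set.uIcc a b := Set.uIoc_subset_uIcc ht
    have h1 : (0:ℝ) ≤ |t - x| ^ (-(1/2:ℝ)) := Real.rpow_nonneg (abs_nonneg _) _
    have h2 : |t - y| ^ (-(1/2:ℝ)) ≤ m ^ (-(1/2:ℝ)) :=
      Real.rpow_le_rpow_of_nonpos hm0 (hm t ht') (by norm_num)
    have h3 : (0:ℝ) ≤ |t - y| ^ (-(1/2:ℝ)) := Real.rpow_nonneg (abs_nonneg _) _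
    simp only [Real.norm_eq_abs, abs_of_nonneg (mul_nonneg h1 h3),
      abs_of_nonneg (mul_nonneg h1 (Real.rpow_nonneg hm0.le _))]
    exact mul_le_mul_of_nonneg_left h2 h1

lemma abs_rpow_inv_sqrt (s : ℝ) : |s| ^ (-(1/2:ℝ)) = (Real.sqrt |s|)⁻¹ := by
  rw [Real.rpow_neg (abs_nonneg s), Real.sqrt_eq_rpow]

lemma deriv_arcsin_piece {x y t : ℝ} (hxt : x < t) (hty : t < y) :
    HasDerivAt (fun t => Real.arcsin ((2*t - x - y)/(y - x)))
      (|t - x| ^ (-(1/2:ℝ)) * |t - y| ^ (-(1/2:ℝ))) t := by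
  have hd : 0 < y - x := by linarith
  have hu1 : -1 < (2*t - x - y)/(y - x) := by
    rw [lt_div_iff₀ hd]; linarith
  have hu2 : (2*t - x - y)/(y - x) < 1 := by
    rw [div_lt_iff₀ hd]; linarith
  have hlin : HasDerivAt (fun t : ℝ => (2*t - x - y)/(y - x)) (2*1/(y - x)) t :=
    ((((hasDerivAt_id t).const_mul 2).sub_const x).sub_const y).div_const (y - x)
  have harc := (Real.hasDerivAt_arcsin (ne_of_gt hu1) (ne_of_lt hu2)).comp t hlin
  have ha : (0:ℝ) < Real.sqrt (t - x) := Real.sqrt_pos.2 (by linarith)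
  have hb : (0:ℝ) < Real.sqrt (y - t) := Real.sqrt_pos.2 (by linarith)
  have e1 : Real.sqrt (t - x) ^ 2 = t - x := Real.sq_sqrt (by linarith)
  have e2 : Real.sqrt (y - t) ^ 2 = y - t := Real.sq_sqrt (by linarith)
  have hs : Real.sqrt (1 - ((2*t - x - y)/(y - x))^2)
      = 2 * Real.sqrt (t - x) * Real.sqrt (y - t) / (y - x) := by
    have h1 : 1 - ((2*t - x - y)/(y - x))^2
        = (2 * Real.sqrt (t - x) * Real.sqrt (y - t) / (y - x))^2 := by
      rw [div_pow, div_pow, mul_pow, mul_pow, e1, e2]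
      field_simp
      ring
    rw [h1, Real.sqrt_sq (by positivity)]
  refine harc.congr_deriv ?_; symm
  rw [hs, abs_rpow_inv_sqrt, abs_rpow_inv_sqrt,
    abs_of_pos (by linarith : (0:ℝ) < t - x),
    abs_of_neg (by linarith : t - y < 0), neg_sub]
  rw [div_mul_div_comm, one_mul, eq_div_iff (by positivity)]
  field_simp

lemma deriv_log_right {x y t : ℝ} (hxt : x < t) (hyt : y < t) :
    HasDerivAt (fun t => 2 * Real.log (Real.sqrt (t - x) + Real.sqrt (t - y)))
      (|t - x| ^ (-(1/2:ℝ)) * |t - y| ^ (-(1/2:ℝ))) t := by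
  have ha : (0:ℝ) < Real.sqrt (t - x) := Real.sqrt_pos.2 (by linarith)
  have hb : (0:ℝ) < Real.sqrt (t - y) := Real.sqrt_pos.2 (by linarith)
  have h1 : HasDerivAt (fun t : ℝ => Real.sqrt (t - x)) (1/(2*Real.sqrt (t - x)) * 1) t :=
    (Real.hasDerivAt_sqrt (by linarith : t - x ≠ 0)).comp t ((hasDerivAt_id t).sub_const x)
  have h2 : HasDerivAt (fun t : ℝ => Real.sqrt (t - y)) (1/(2*Real.sqrt (t - y)) * 1) t :=
    (Real.hasDerivAt_sqrt (by linarith : t - y ≠ 0)).comp t ((hasDerivAt_id t).sub_const y)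
  have hsum := h1.add h2
  have hlog := (Real.hasDerivAt_log (by show Real.sqrt (t - x) + Real.sqrt (t - y) ≠ 0; positivity)).comp t hsum
  have := hlog.const_mul 2
  refine this.congr_deriv ?_; symm
  rw [abs_rpow_inv_sqrt, abs_rpow_inv_sqrt,
    abs_of_pos (by linarith : (0:ℝ) < t - x), abs_of_pos (by linarith : (0:ℝ) < t - y)]
  have e1 : Real.sqrt (t - x) ^ 2 = t - x := Real.sq_sqrt (by linarith)
  have e2 : Real.sqrt (t - y) ^ 2 = t - y := Real.sq_sqrt (by linarith)
  simp only [Pi.add_apply]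
  field_simp
  ring

lemma deriv_log_left {x y t : ℝ} (htx : t < x) (hty : t < y) :
    HasDerivAt (fun t => -2 * Real.log (Real.sqrt (x - t) + Real.sqrt (y - t)))
      (|t - x| ^ (-(1/2:ℝ)) * |t - y| ^ (-(1/2:ℝ))) t := by
  have ha : (0:ℝ) < Real.sqrt (x - t) := Real.sqrt_pos.2 (by linarith)
  have hb : (0:ℝ) < Real.sqrt (y - t) := Real.sqrt_pos.2 (by linarith)
  have h1 : HasDerivAt (fun t : ℝ => Real.sqrt (x - t)) (1/(2*Real.sqrt (x - t)) * (-1)) t :=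
    (Real.hasDerivAt_sqrt (by linarith : x - t ≠ 0)).comp t ((hasDerivAt_id t).const_sub x)
  have h2 : HasDerivAt (fun t : ℝ => Real.sqrt (y - t)) (1/(2*Real.sqrt (y - t)) * (-1)) t :=
    (Real.hasDerivAt_sqrt (by linarith : y - t ≠ 0)).comp t ((hasDerivAt_id t).const_sub y)
  have hsum := h1.add h2
  have hlog := (Real.hasDerivAt_log (by show Real.sqrt (x - t) + Real.sqrt (y - t) ≠ 0; positivity)).comp t hsum
  have := hlog.const_mul (-2)
  refine this.congr_deriv ?_; symm
  rw [abs_rpow_inv_sqrt, abs_rpow_inv_sqrt,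
    abs_of_neg (by linarith : t - x < 0), abs_of_neg (by linarith : t - y < 0),
    neg_sub, neg_sub]
  simp only [Pi.add_apply]
  field_simp
  ring

lemma intInt_g' (x y a b m : ℝ) (hm0 : 0 < m) (hm : ∀ t ∈ Set.uIcc a b, m ≤ |t - x|) :
    IntervalIntegrable (fun t => |t - x| ^ (-(1/2:ℝ)) * |t - y| ^ (-(1/2:ℝ))) volume a b := by
  have heq : (fun t => |t - x| ^ (-(1/2:ℝ)) * |t - y| ^ (-(1/2:ℝ)))
      = fun t => |t - y| ^ (-(1/2:ℝ)) * |t - x| ^ (-(1/2:ℝ)) := by funext t; ring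
  rw [heq]; exact intInt_g y x a b m hm0 hm

lemma intInt_mid {x y : ℝ} (hxy : x < y) :
    IntervalIntegrable (fun t => |t - x| ^ (-(1/2:ℝ)) * |t - y| ^ (-(1/2:ℝ))) volume x y := by
  have h1 : IntervalIntegrable (fun t => |t - x| ^ (-(1/2:ℝ)) * |t - y| ^ (-(1/2:ℝ)))
      volume x ((x+y)/2) := by
    refine intInt_g x y _ _ ((y-x)/2) (by linarith) fun t ht => ?_
    rw [Set.uIcc_of_le (by linarith)] at ht
    rw [abs_of_neg (by rcases ht with ⟨h1,h2⟩; linarith : t - y < 0)]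
    rcases ht with ⟨h1, h2⟩; linarith
  have h2 : IntervalIntegrable (fun t => |t - x| ^ (-(1/2:ℝ)) * |t - y| ^ (-(1/2:ℝ)))
      volume ((x+y)/2) y := by
    refine intInt_g' x y _ _ ((y-x)/2) (by linarith) fun t ht => ?_
    rw [Set.uIcc_of_le (by linarith)] at ht
    rw [abs_of_pos (by rcases ht with ⟨h1,h2⟩; linarith : (0:ℝ) < t - x)]
    rcases ht with ⟨h1, h2⟩; linarith
  exact h1.trans h2

lemma integral_mid {x y : ℝ} (hxy : x < y) :
    ∫ t in x..y, |t - x| ^ (-(1/2:ℝ)) * |t - y| ^ (-(1/2:ℝ)) = π := by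
  rw [intervalIntegral.integral_eq_sub_of_hasDeriv_right_of_le hxy.le
    ((Real.continuous_arcsin.comp (by continuity)).continuousOn)
    (fun t ht => (deriv_arcsin_piece ht.1 ht.2).hasDerivWithinAt)
    (intInt_mid hxy)]
  have hd : y - x ≠ 0 := by linarith
  simp only [Function.comp_apply]
  rw [show (2*y - x - y)/(y - x) = 1 by field_simp; ring,
      show (2*x - x - y)/(y - x) = -1 by field_simp; ring]
  rw [Real.arcsin_one, Real.arcsin_neg_one]
  ring

lemma intInt_right {x y : ℝ} (hxy : x < y) (h : y < x + 1) :
    IntervalIntegrable (fun t => |t - x| ^ (-(1/2:ℝ)) * |t - y| ^ (-(1/2:ℝ))) volume y (x+1) := by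
  refine intInt_g' x y _ _ (y - x) (by linarith) fun t ht => ?_
  rw [Set.uIcc_of_le (by linarith)] at ht
  rw [abs_of_pos (by rcases ht with ⟨h1,h2⟩; linarith : (0:ℝ) < t - x)]
  rcases ht with ⟨h1, h2⟩; linarith

lemma integral_right {x y : ℝ} (hxy : x < y) (h : y < x + 1) :
    ∫ t in y..(x+1), |t - x| ^ (-(1/2:ℝ)) * |t - y| ^ (-(1/2:ℝ))
      = 2 * Real.log (1 + Real.sqrt (x + 1 - y)) - Real.log (y - x) := by
  have hcont : ContinuousOn (fun t => 2 * Real.log (Real.sqrt (t - x) + Real.sqrt (t - y)))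
      (Set.Icc y (x+1)) := by
    refine ContinuousOn.mul continuousOn_const (ContinuousOn.log ?_ ?_)
    · exact ((Real.continuous_sqrt.comp (continuous_id.sub continuous_const)).add
        (Real.continuous_sqrt.comp (continuous_id.sub continuous_const))).continuousOn
    · intro t ht
      have h1 : (0:ℝ) < Real.sqrt (t - x) := Real.sqrt_pos.2 (by rcases ht with ⟨a,b⟩; linarith)
      have h2 : (0:ℝ) ≤ Real.sqrt (t - y) := Real.sqrt_nonneg _
      positivity
  rw [intervalIntegral.integral_eq_sub_of_hasDeriv_right_of_le (by linarith) hcont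
    (fun t ht => (deriv_log_right (by rcases ht with ⟨a,b⟩; linarith) ht.1).hasDerivWithinAt)
    (intInt_right hxy h)]
  rw [show x + 1 - x = (1:ℝ) by ring, Real.sqrt_one, sub_self, Real.sqrt_zero, add_zero,
    Real.log_sqrt (by linarith)]
  ring

lemma intInt_left {x y : ℝ} (hxy : x < y) (h : y - 1 < x) :
    IntervalIntegrable (fun t => |t - x| ^ (-(1/2:ℝ)) * |t - y| ^ (-(1/2:ℝ))) volume (y-1) x := by
  refine intInt_g x y _ _ (y - x) (by linarith) fun t ht => ?_
  rw [Set.uIcc_of_le (by linarith)] at ht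
  rw [abs_of_neg (by rcases ht with ⟨h1,h2⟩; linarith : t - y < 0)]
  rcases ht with ⟨h1, h2⟩; linarith

lemma integral_left {x y : ℝ} (hxy : x < y) (h : y - 1 < x) :
    ∫ t in (y-1)..x, |t - x| ^ (-(1/2:ℝ)) * |t - y| ^ (-(1/2:ℝ))
      = 2 * Real.log (1 + Real.sqrt (x - (y - 1))) - Real.log (y - x) := by
  have hcont : ContinuousOn (fun t => -2 * Real.log (Real.sqrt (x - t) + Real.sqrt (y - t)))
      (Set.Icc (y-1) x) := by
    refine ContinuousOn.mul continuousOn_const (ContinuousOn.log ?_ ?_)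
    · exact ((Real.continuous_sqrt.comp (continuous_const.sub continuous_id)).add
        (Real.continuous_sqrt.comp (continuous_const.sub continuous_id))).continuousOn
    · intro t ht
      have h2 : (0:ℝ) < Real.sqrt (y - t) := Real.sqrt_pos.2 (by rcases ht with ⟨a,b⟩; linarith)
      have h1 : (0:ℝ) ≤ Real.sqrt (x - t) := Real.sqrt_nonneg _
      positivity
  rw [intervalIntegral.integral_eq_sub_of_hasDeriv_right_of_le (by linarith) hcont
    (fun t ht => (deriv_log_left ht.2 (by rcases ht with ⟨a,b⟩; linarith)).hasDerivWithinAt)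
    (intInt_left hxy h)]
  rw [sub_self, Real.sqrt_zero, zero_add, Real.log_sqrt (by linarith),
    show y - (y - 1) = (1:ℝ) by ring, Real.sqrt_one, show x - (y-1) = x - y + 1 by ring]
  rw [add_comm (Real.sqrt (x - y + 1)) 1]
  ring

lemma integral_case2 {x y : ℝ} (h1 : 1 < y - x) (h2 : y - x ≤ 2) :
    ∫ t in (y-1)..(x+1), |t - x| ^ (-(1/2:ℝ)) * |t - y| ^ (-(1/2:ℝ))
      = 2 * Real.arcsin ((x + 2 - y)/(y - x)) := by
  have hint : IntervalIntegrable (fun t => |t - x| ^ (-(1/2:ℝ)) * |t - y| ^ (-(1/2:ℝ)))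
      volume (y-1) (x+1) := by
    refine intInt_g x y _ _ (y - x - 1) (by linarith) fun t ht => ?_
    rw [Set.uIcc_of_le (by linarith)] at ht
    rw [abs_of_neg (by rcases ht with ⟨a,b⟩; linarith : t - y < 0)]
    rcases ht with ⟨a, b⟩; linarith
  rw [intervalIntegral.integral_eq_sub_of_hasDeriv_right_of_le (by linarith)
    ((Real.continuous_arcsin.comp (by continuity)).continuousOn)
    (fun t ht => (deriv_arcsin_piece (by rcases ht with ⟨a,b⟩; linarith)
      (by rcases ht with ⟨a,b⟩; linarith) : HasDerivAt _ _ t).hasDerivWithinAt)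
    hint]
  simp only [Function.comp_apply]
  have hd : y - x ≠ 0 := by linarith
  rw [show (2*(x+1) - x - y)/(y - x) = (x + 2 - y)/(y-x) by ring,
      show (2*(y-1) - x - y)/(y - x) = -((x + 2 - y)/(y-x)) by field_simp; ring,
      Real.arcsin_neg]
  ring

lemma case2_conv {d : ℝ} (h1 : 1 < d) (h2 : d ≤ 2) :
    2 * Real.arcsin ((2 - d)/d) = -2 * Real.arctan ((d - 2)/(2 * Real.sqrt (d - 1))) := by
  have hd : (0:ℝ) < d := by linarith
  have hu1 : -1 < (2 - d)/d := by rw [lt_div_iff₀ hd]; linarith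
  have hu2 : (2 - d)/d < 1 := by rw [div_lt_iff₀ hd]; linarith
  have hs : (0:ℝ) < Real.sqrt (d - 1) := Real.sqrt_pos.2 (by linarith)
  have e1 : Real.sqrt (d - 1) ^ 2 = d - 1 := Real.sq_sqrt (by linarith)
  rw [Real.arcsin_eq_arctan ⟨hu1, hu2⟩]
  have hsq : Real.sqrt (1 - ((2 - d)/d)^2) = 2 * Real.sqrt (d - 1) / d := by
    rw [show 1 - ((2 - d)/d)^2 = (2 * Real.sqrt (d - 1) / d)^2 by
      rw [div_pow, div_pow, mul_pow, e1]; field_simp; ring]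
    exact Real.sqrt_sq (by positivity)
  rw [hsq, show (2 - d)/d / (2 * Real.sqrt (d - 1) / d) = -((d - 2)/(2 * Real.sqrt (d-1))) by
    field_simp; ring, Real.arctan_neg]
  ring

lemma integral_eq_interval {x y : ℝ} (hxy : x ≤ y) (h2 : y ≤ x + 2) :
    (∫ t : ℝ, (if |t - x| ≤ 1 ∧ |t - y| ≤ 1 then
        |t - x| ^ (-(1/2:ℝ)) * |t - y| ^ (-(1/2:ℝ)) else 0))
      = ∫ t in (y-1)..(x+1), |t - x| ^ (-(1/2:ℝ)) * |t - y| ^ (-(1/2:ℝ)) := by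
  have heq : (fun t => if |t - x| ≤ 1 ∧ |t - y| ≤ 1 then
      |t - x| ^ (-(1/2:ℝ)) * |t - y| ^ (-(1/2:ℝ)) else 0)
      = Set.indicator (Set.Icc (y-1) (x+1))
        (fun t => |t - x| ^ (-(1/2:ℝ)) * |t - y| ^ (-(1/2:ℝ))) := by
    funext t
    rw [Set.indicator_apply]
    refine if_congr ?_ rfl rfl
    rw [Set.mem_Icc, abs_le, abs_le]
    constructor
    · rintro ⟨⟨a1, a2⟩, ⟨b1, b2⟩⟩; exact ⟨by linarith, by linarith⟩
    · rintro ⟨a, b⟩; exact ⟨⟨by linarith, by linarith⟩, ⟨by linarith, by linarith⟩⟩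
  rw [heq, MeasureTheory.integral_indicator measurableSet_Icc,
    MeasureTheory.integral_Icc_eq_integral_Ioc,
    ← intervalIntegral.integral_of_le (by linarith)]

lemma case1_conv {d : ℝ} (h0 : 0 < d) (h1 : d < 1) :
    Real.log ((2 * Real.sqrt (1 - d) - (d - 2)) / |2 * Real.sqrt (1 - d) + (d - 2)|)
      = 4 * Real.log (1 + Real.sqrt (1 - d)) - 2 * Real.log d := by
  set s := Real.sqrt (1 - d) with hs
  have hs0 : 0 ≤ s := Real.sqrt_nonneg _
  have e1 : s ^ 2 = 1 - d := Real.sq_sqrt (by linarith)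
  have hs1 : s < 1 := by nlinarith
  have habs : |2 * s + (d - 2)| = (1 - s)^2 := by
    rw [abs_of_neg (by nlinarith : 2 * s + (d - 2) < 0)]; nlinarith
  have hnum : 2 * s - (d - 2) = (1 + s)^2 := by nlinarith
  have hratio : (2 * s - (d - 2)) / |2 * s + (d - 2)| = ((1 + s)^2 / d)^2 := by
    rw [habs, hnum, div_pow, div_eq_div_iff (by nlinarith) (by positivity)]
    linear_combination ((1+s)^2 * (d + 1 - s^2)) * e1
  rw [hratio, Real.log_pow, Real.log_div (by positivity) (by linarith), Real.log_pow]
  push_cast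
  ring

lemma main1 {x y : ℝ} (hxy : x < y) (h1 : y - x < 1) :
    (∫ t : ℝ, (if |t - x| ≤ 1 ∧ |t - y| ≤ 1 then
        |t - x| ^ (-(1/2:ℝ)) * |t - y| ^ (-(1/2:ℝ)) else 0))
      = Real.log ((2 * Real.sqrt (1 - (y - x)) - ((y - x) - 2)) /
          |2 * Real.sqrt (1 - (y - x)) + ((y - x) - 2)|) + π := by
  have A := intInt_left hxy (by linarith)
  have B := intInt_mid hxy
  have C := intInt_right hxy (by linarith)
  rw [integral_eq_interval hxy.le (by linarith),
    ← intervalIntegral.integral_add_adjacent_intervals A (B.trans C),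
    ← intervalIntegral.integral_add_adjacent_intervals B C,
    integral_left hxy (by linarith), integral_mid hxy, integral_right hxy (by linarith),
    show x - (y - 1) = 1 - (y - x) by ring, show x + 1 - y = 1 - (y - x) by ring,
    case1_conv (by linarith : (0:ℝ) < y - x) h1]
  ring

lemma main2 {x y : ℝ} (hxy : x < y) (h1 : 1 < y - x) (h2 : y - x ≤ 2) :
    (∫ t : ℝ, (if |t - x| ≤ 1 ∧ |t - y| ≤ 1 then
        |t - x| ^ (-(1/2:ℝ)) * |t - y| ^ (-(1/2:ℝ)) else 0))
      = -2 * Real.arctan (((y - x) - 2) / (2 * Real.sqrt ((y - x) - 1))) := by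
  rw [integral_eq_interval hxy.le (by linarith), integral_case2 h1 h2,
    show (x + 2 - y)/(y - x) = (2 - (y - x))/(y - x) by ring_nf]
  exact case2_conv h1 h2

lemma main3 (x y : ℝ) (h : 2 < |x - y|) :
    (∫ t : ℝ, (if |t - x| ≤ 1 ∧ |t - y| ≤ 1 then
        |t - x| ^ (-(1/2:ℝ)) * |t - y| ^ (-(1/2:ℝ)) else 0)) = 0 := by
  have hz : ∀ t : ℝ, (if |t - x| ≤ 1 ∧ |t - y| ≤ 1 then
      |t - x| ^ (-(1/2:ℝ)) * |t - y| ^ (-(1/2:ℝ)) else 0) = 0 := by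
    intro t
    refine if_neg fun ⟨a, b⟩ => absurd ?_ (not_le.2 h)
    calc |x - y| ≤ |x - t| + |t - y| := abs_sub_le x t y
      _ = |t - x| + |t - y| := by rw [abs_sub_comm]
      _ ≤ 2 := by linarith
  simp only [hz, MeasureTheory.integral_zero]

lemma Iswap (x y : ℝ) :
    (∫ t : ℝ, (if |t - x| ≤ 1 ∧ |t - y| ≤ 1 then
        |t - x| ^ (-(1/2:ℝ)) * |t - y| ^ (-(1/2:ℝ)) else 0))
      = ∫ t : ℝ, (if |t - y| ≤ 1 ∧ |t - x| ≤ 1 then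
        |t - y| ^ (-(1/2:ℝ)) * |t - x| ^ (-(1/2:ℝ)) else 0) := by
  congr 1; funext t; exact if_congr and_comm (mul_comm _ _) rfl

/-- Explicit evaluation of `∫ 1_{|t−x|≤1} 1_{|t−x̃|≤1} |t−x|^{-1/2} |t−x̃|^{-1/2} dt`. -/
theorem stmt18 (x y : ℝ) (hxy : x ≠ y) :
    (|x - y| < 1 →
      (∫ t : ℝ, (if |t - x| ≤ 1 ∧ |t - y| ≤ 1 then
          |t - x| ^ (-(1 / 2 : ℝ)) * |t - y| ^ (-(1 / 2 : ℝ)) else 0)) =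
        Real.log ((2 * Real.sqrt (1 - |x - y|) - (|x - y| - 2)) /
            |2 * Real.sqrt (1 - |x - y|) + (|x - y| - 2)|) + Real.pi) ∧
    (1 < |x - y| → |x - y| ≤ 2 →
      (∫ t : ℝ, (if |t - x| ≤ 1 ∧ |t - y| ≤ 1 then
          |t - x| ^ (-(1 / 2 : ℝ)) * |t - y| ^ (-(1 / 2 : ℝ)) else 0)) =
        -2 * Real.arctan ((|x - y| - 2) / (2 * Real.sqrt (|x - y| - 1)))) ∧
    (2 < |x - y| →
      (∫ t : ℝ, (if |t - x| ≤ 1 ∧ |t - y| ≤ 1 then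
          |t - x| ^ (-(1 / 2 : ℝ)) * |t - y| ^ (-(1 / 2 : ℝ)) else 0)) = 0) := by
  refine ⟨fun h1 => ?_, fun h1 h2 => ?_, fun h1 => main3 x y h1⟩
  · rcases lt_or_gt_of_ne hxy with h | h
    · rw [abs_of_neg (by linarith : x - y < 0), neg_sub] at h1 ⊢
      exact main1 h h1
    · rw [abs_of_pos (by linarith : (0:ℝ) < x - y)] at h1 ⊢
      rw [Iswap x y]
      exact main1 h h1
  · rcases lt_or_gt_of_ne hxy with h | h
    · rw [abs_of_neg (by linarith : x - y < 0), neg_sub] at h1 h2 ⊢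
      exact main2 h h1 h2
    · rw [abs_of_pos (by linarith : (0:ℝ) < x - y)] at h1 h2 ⊢
      rw [Iswap x y]
      exact main2 h h1 h2
end
end
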